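/- arXiv:1312.5881 — 8 statements merged into one kernel-verified Lean document; each statement's English description precedes it below -/
import Mathlib

section
/- For every integer n ≥ 1, exp(1/(240n^3) - 11/(6720n^5)) < e^n · n! / (n^n · √(2πn) · exp(ψ'(n+1/2)/12)), where ψ' is the trigamma function. -/
open Real Filter Topology

noncomputable def trigamma (x : ℝ) : ℝ :=
  iteratedDeriv 2 (fun y => Real.log (Real.Gamma y)) x

noncomputable def sn (n : ℕ) : ℝ :=
  Real.log n.factorial + n - ((n : ℝ) + 1/2) * Real.log n - Real.log (Real.sqrt (2 * Real.pi))

noncomputable def gseq (j : ℕ) : ℝ :=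
  ((j : ℝ) + 1/2) * (Real.log ((j : ℝ) + 1) - Real.log j) - 1

noncomputable def Pfun (j : ℕ) : ℝ := 1/(240*(j:ℝ)^3) - 11/(6720*(j:ℝ)^5)

lemma aux_log_ineq {y : ℝ} (h0 : 0 < y) (h1 : y < 1) :
    2 * (y + y^3/3 + y^5/5 + y^7/7) ≤ Real.log (1 + y) - Real.log (1 - y) := by
  set F : ℝ → ℝ := fun t => Real.log (1 + t) - Real.log (1 - t) - 2*(t + t^3/3 + t^5/5 + t^7/7)
    with hF
  have hderiv : ∀ t ∈ Set.Ioo (0:ℝ) y, HasDerivAt F (1/(1+t) + 1/(1-t) - 2*(1 + t^2 + t^4 + t^6)) t := by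
    intro t ht
    have ht0 : (0:ℝ) < 1 + t := by linarith [ht.1]
    have ht1 : (0:ℝ) < 1 - t := by linarith [ht.2, h1]
    have d1 : HasDerivAt (fun t : ℝ => Real.log (1 + t)) (1/(1+t)) t := by
      have := ((hasDerivAt_id t).const_add 1).log ht0.ne'
      simpa using this
    have d2 : HasDerivAt (fun t : ℝ => Real.log (1 - t)) (-(1/(1-t))) t := by
      have : HasDerivAt (fun t : ℝ => 1 - t) (-1) t := by
        simpa using ((hasDerivAt_id t).const_sub 1)
      have := this.log ht1.ne'
      simpa [neg_div] using this
    have d3 : HasDerivAt (fun t : ℝ => 2*(t + t^3/3 + t^5/5 + t^7/7))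
        (2*(1 + t^2 + t^4 + t^6)) t := by
      have h := (((hasDerivAt_id t).add ((hasDerivAt_pow 3 t).div_const 3)).add
        ((hasDerivAt_pow 5 t).div_const 5)).add ((hasDerivAt_pow 7 t).div_const 7)
      have h2 := h.const_mul 2
      refine h2.congr_deriv ?_
      push_cast
      ring
    have := (d1.sub d2).sub d3
    refine this.congr_deriv ?_
    ring
  have hcont : ContinuousOn F (Set.Icc 0 y) := by
    apply ContinuousOn.sub
    · apply ContinuousOn.sub
      · apply ContinuousOn.log (by fun_prop)
        intro t ht
        have := ht.1; intro h; nlinarith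
      · apply ContinuousOn.log (by fun_prop)
        intro t ht
        have := ht.2; intro h; nlinarith
    · fun_prop
  have hmono : MonotoneOn F (Set.Icc 0 y) := by
    apply monotoneOn_of_deriv_nonneg (convex_Icc 0 y) hcont
    · intro t ht
      rw [interior_Icc] at ht
      exact (hderiv t ht).differentiableAt.differentiableWithinAt
    · intro t ht
      rw [interior_Icc] at ht
      rw [(hderiv t ht).deriv]
      have ht0 : (0:ℝ) < 1 + t := by linarith [ht.1]
      have ht1 : (0:ℝ) < 1 - t := by linarith [ht.2, h1]
      have key : 1/(1+t) + 1/(1-t) - 2*(1 + t^2 + t^4 + t^6) = 2*t^8/((1+t)*(1-t)) := by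
        field_simp
        ring
      rw [key]
      positivity
  have h0y : (0:ℝ) ∈ Set.Icc (0:ℝ) y := by constructor <;> linarith
  have hyy : y ∈ Set.Icc (0:ℝ) y := by constructor <;> linarith
  have := hmono h0y hyy h0.le
  simp only [hF] at this
  norm_num at this
  linarith

lemma gseq_lower (j : ℕ) (hj : 1 ≤ j) :
    (1/(2*(j:ℝ)+1))^2/3 + (1/(2*(j:ℝ)+1))^4/5 + (1/(2*(j:ℝ)+1))^6/7 ≤ gseq j := by
  have hj1 : (1:ℝ) ≤ (j:ℝ) := by exact_mod_cast hj
  set y : ℝ := 1/(2*(j:ℝ)+1) with hy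
  have hy0 : 0 < y := by positivity
  have hy1 : y < 1 := by
    rw [hy, div_lt_one (by positivity)]; linarith
  have hyj : y * (2*(j:ℝ)+1) = 1 := by
    rw [hy]; field_simp
  have hlog : Real.log ((j:ℝ) + 1) - Real.log j = Real.log (1 + y) - Real.log (1 - y) := by
    have e1 : 1 + y = (2*(j:ℝ)+2)/(2*(j:ℝ)+1) := by
      rw [hy]; field_simp; ring
    have e2 : 1 - y = (2*(j:ℝ))/(2*(j:ℝ)+1) := by
      rw [hy]; field_simp; ring
    rw [e1, e2, Real.log_div (by positivity) (by positivity),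
      Real.log_div (by positivity) (by positivity)]
    have e3 : 2*(j:ℝ)+2 = 2*((j:ℝ)+1) := by ring
    rw [e3, Real.log_mul (by norm_num) (by positivity), Real.log_mul (by norm_num) (by positivity)]
    ring
  have key := aux_log_ineq hy0 hy1
  rw [← hlog] at key
  have hpos : (0:ℝ) < (j:ℝ) + 1/2 := by positivity
  have := mul_le_mul_of_nonneg_left key hpos.le
  rw [gseq]
  have hexp : ((j:ℝ) + 1/2) * (2 * (y + y^3/3 + y^5/5 + y^7/7))
      = 1 + (y^2/3 + y^4/5 + y^6/7) := by
    have h2 : (j:ℝ) + 1/2 = (2*(j:ℝ)+1)/2 := by ring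
    linear_combination (1 + y^2/3 + y^4/5 + y^6/7) * hyj
  rw [hexp] at this
  linarith

lemma summable_shift : Summable (fun m : ℕ => 1 / ((m:ℝ)+1)^2) := by
  have h := (summable_nat_add_iff (f := fun n : ℕ => 1 / (n:ℝ)^2) 1).mpr
    (Real.summable_one_div_nat_pow.mpr one_lt_two)
  refine h.congr fun m => ?_
  push_cast
  ring

lemma summable_trigamma {x : ℝ} (hx : 1 < x) :
    Summable (fun m : ℕ => 1 / (x + m)^2) := by
  refine Summable.of_nonneg_of_le (fun m => by positivity) (fun m => ?_) summable_shift
  have h1 : (0:ℝ) < (m:ℝ)+1 := by positivity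
  have h3 : ((m:ℝ)+1)^2 ≤ (x+(m:ℝ))^2 := by nlinarith
  exact one_div_le_one_div_of_le (by positivity) h3

lemma tendstoUniformlyOn_const_seq {c : ℕ → ℝ} {L : ℝ} (h : Tendsto c atTop (𝓝 L)) (s : Set ℝ) :
    TendstoUniformlyOn (fun n (_ : ℝ) => c n) (fun _ => L) atTop s := by
  rw [Metric.tendstoUniformlyOn_iff]
  intro ε hε
  filter_upwards [Metric.tendsto_nhds.mp h ε hε] with n hn x _
  rwa [dist_comm]

lemma tendstoUniformlyOn_refl' (g : ℝ → ℝ) (s : Set ℝ) :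
    TendstoUniformlyOn (fun (_ : ℕ) x => g x) g atTop s := by
  rw [Metric.tendstoUniformlyOn_iff]
  intro ε hε
  filter_upwards with n x _
  simpa using hε

lemma trigamma_eq {x0 : ℝ} (hx0 : 1 < x0) :
    trigamma x0 = ∑' m : ℕ, 1 / (x0 + m)^2 := by
  set S : Set ℝ := Set.Ioi 1 with hS
  have hSopen : IsOpen S := isOpen_Ioi
  set f1 : ℕ → ℝ → ℝ := fun n x => Real.log n - ∑ m ∈ Finset.range (n+1), 1/(x+(m:ℝ)) with hf1
  set ψ : ℝ → ℝ := fun x => -Real.eulerMascheroniConstant + (-(1/x)) +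
    ∑' m : ℕ, x/(((m:ℝ)+1)*(x+((m:ℝ)+1))) with hψ
  set f2 : ℕ → ℝ → ℝ := fun n x => ∑ m ∈ Finset.range (n+1), 1/(x+(m:ℝ))^2 with hf2
  set g2 : ℝ → ℝ := fun x => ∑' m : ℕ, 1/(x+(m:ℝ))^2 with hg2
  set F : ℕ → ℝ → ℝ := fun n x => -(Real.eulerMascheroniSeq' n) + (-(1/x)) +
    ∑ m ∈ Finset.range n, x/(((m:ℝ)+1)*(x+((m:ℝ)+1))) with hFdef
  -- F agrees with f1 for n ≥ 1 on S
  have hF_eq : ∀ n : ℕ, 1 ≤ n → Set.EqOn (F n) (f1 n) S := by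
    intro n hn x hx
    have hx1 : (1:ℝ) < x := hx
    simp only [hFdef, hf1, Real.eulerMascheroniSeq', if_neg (Nat.one_le_iff_ne_zero.mp hn)]
    rw [Finset.sum_range_succ' (fun m => 1/(x+(m:ℝ))) n]
    have hharm : ((harmonic n : ℚ) : ℝ) = ∑ i ∈ Finset.range n, 1/((i:ℝ)+1) := by
      rw [harmonic]
      push_cast
      simp [one_div]
    rw [hharm]
    have hterm : ∀ m ∈ Finset.range n, x/(((m:ℝ)+1)*(x+((m:ℝ)+1)))
        = 1/((m:ℝ)+1) - 1/(x+((m:ℝ)+1)) := by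
      intro m _
      have h1 : (0:ℝ) < (m:ℝ)+1 := by positivity
      have h2 : (0:ℝ) < x+((m:ℝ)+1) := by linarith
      field_simp
      ring
    have hc : ∀ k ∈ Finset.range n, (1:ℝ)/(x+((k+1:ℕ):ℝ)) = 1/(x+((k:ℝ)+1)) := by
      intro k _
      push_cast
      ring
    rw [Finset.sum_congr rfl hterm, Finset.sum_congr rfl hc, Finset.sum_sub_distrib]
    simp only [Nat.cast_zero, add_zero]
    ring
  -- locally uniform convergence of f1 to ψ on S
  have hTLU : TendstoLocallyUniformlyOn f1 ψ atTop S := by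
    rw [tendstoLocallyUniformlyOn_iff_forall_isCompact hSopen]
    intro K hKS hK
    rcases hK.bddAbove with ⟨b0, hb0⟩
    set b : ℝ := max b0 1 with hb
    have hbK : ∀ x ∈ K, x ≤ b := fun x hx => le_trans (hb0 hx) (le_max_left _ _)
    -- uniform convergence of F on K
    have hsum : TendstoUniformlyOn
        (fun N x => ∑ m ∈ Finset.range N, x/(((m:ℝ)+1)*(x+((m:ℝ)+1))))
        (fun x => ∑' m : ℕ, x/(((m:ℝ)+1)*(x+((m:ℝ)+1)))) atTop K := by
      apply tendstoUniformlyOn_tsum_nat (u := fun m => b * (1/((m:ℝ)+1)^2))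
        (summable_shift.mul_left b)
      intro m x hx
      have hx1 : (1:ℝ) < x := hKS hx
      have hxb : x ≤ b := hbK x hx
      have h1 : (0:ℝ) < (m:ℝ)+1 := by positivity
      have h2 : (0:ℝ) < x+((m:ℝ)+1) := by linarith
      rw [Real.norm_eq_abs, abs_of_nonneg (by positivity)]
      rw [div_le_iff₀ (by positivity)]
      have : b * (1/((m:ℝ)+1)^2) * (((m:ℝ)+1)*(x+((m:ℝ)+1)))
          = b * (x + ((m:ℝ)+1))/((m:ℝ)+1) := by
        field_simp
      rw [this]
      rw [le_div_iff₀ h1]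
      nlinarith
    have hFU : TendstoUniformlyOn F ψ atTop K := by
      have h1 := (tendstoUniformlyOn_const_seq
        (h := tendsto_eulerMascheroniSeq'.neg) (s := K)).add
        (tendstoUniformlyOn_refl' (fun x => -(1/x)) K)
      exact h1.add hsum
    apply hFU.congr
    filter_upwards [eventually_ge_atTop 1] with n hn
    exact fun x hx => hF_eq n hn (hKS hx)
  -- derivative of logGammaSeq
  have hDeriv1 : ∀ᶠ n in atTop, ∀ x ∈ S,
      HasDerivAt (fun y => Real.BohrMollerup.logGammaSeq y n) (f1 n x) x := by
    filter_upwards [eventually_ge_atTop 1] with n hn x hx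
    have hx1 : (1:ℝ) < x := hx
    have hsum : HasDerivAt (fun y : ℝ => ∑ m ∈ Finset.range (n+1), Real.log (y+(m:ℝ)))
        (∑ m ∈ Finset.range (n+1), 1/(x+(m:ℝ))) x := by
      apply HasDerivAt.fun_sum
      intro m _
      have h2 : (0:ℝ) < x+(m:ℝ) := by positivity
      have := ((hasDerivAt_id x).add_const (m:ℝ)).log h2.ne'
      simpa using this
    have hmain : HasDerivAt (fun y : ℝ => y * Real.log n + Real.log n.factorial
        - ∑ m ∈ Finset.range (n+1), Real.log (y+(m:ℝ)))
        (Real.log n - ∑ m ∈ Finset.range (n+1), 1/(x+(m:ℝ))) x := by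
      have h1 : HasDerivAt (fun y : ℝ => y * Real.log n + Real.log n.factorial)
          (Real.log n) x := by
        simpa using ((hasDerivAt_id x).mul_const (Real.log n)).add_const (Real.log n.factorial)
      exact h1.sub hsum
    have hfun : (fun y => Real.BohrMollerup.logGammaSeq y n)
        = fun y : ℝ => y * Real.log n + Real.log n.factorial
          - ∑ m ∈ Finset.range (n+1), Real.log (y+(m:ℝ)) := by
      funext y
      rw [Real.BohrMollerup.logGammaSeq]
    rw [hfun]
    exact hmain
  -- first derivative of log Gamma
  have step1 : ∀ x ∈ S, HasDerivAt (fun y => Real.log (Real.Gamma y)) (ψ x) x := by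
    intro x hx
    refine hasDerivAt_of_tendstoLocallyUniformlyOn hSopen hTLU hDeriv1 ?_ hx
    intro y hy
    have hy1 : (0:ℝ) < y := by have : (1:ℝ) < y := hy; linarith
    exact Real.BohrMollerup.tendsto_log_gamma hy1
  -- uniform convergence of f2 to g2 on S
  have hTU2 : TendstoUniformlyOn f2 g2 atTop S := by
    have h2 : TendstoUniformlyOn (fun N x => ∑ m ∈ Finset.range N, 1/(x+(m:ℝ))^2) g2 atTop S := by
      apply tendstoUniformlyOn_tsum_nat (u := fun m => 1/((m:ℝ)+1)^2) summable_shift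
      intro m x hx
      have hx1 : (1:ℝ) < x := hx
      have h1 : (0:ℝ) < (m:ℝ)+1 := by positivity
      rw [Real.norm_eq_abs, abs_of_nonneg (by positivity)]
      have h3 : ((m:ℝ)+1)^2 ≤ (x+(m:ℝ))^2 := by nlinarith
      exact one_div_le_one_div_of_le (by positivity) h3
    rw [Metric.tendstoUniformlyOn_iff] at h2 ⊢
    intro ε hε
    exact (tendsto_add_atTop_nat 1).eventually (h2 ε hε)
  -- derivative of f1
  have hDeriv2 : ∀ᶠ n in atTop, ∀ x ∈ S, HasDerivAt (f1 n) (f2 n x) x := by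
    filter_upwards with n x hx
    have hx1 : (1:ℝ) < x := hx
    have hsum : HasDerivAt (fun y : ℝ => ∑ m ∈ Finset.range (n+1), 1/(y+(m:ℝ)))
        (∑ m ∈ Finset.range (n+1), -(1/(x+(m:ℝ))^2)) x := by
      apply HasDerivAt.fun_sum
      intro m _
      have h2 : (0:ℝ) < x+(m:ℝ) := by positivity
      have := (((hasDerivAt_id x).add_const (m:ℝ)).inv h2.ne')
      simp only [one_div]
      refine this.congr_deriv ?_
      rw [id_eq, neg_div, one_div]
    have := hsum.const_sub (Real.log n)
    simp only [hf1, hf2]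
    refine this.congr_deriv ?_
    rw [← Finset.sum_neg_distrib]
    simp
  -- second derivative
  have step2 : ∀ x ∈ S, HasDerivAt ψ (g2 x) x := by
    intro x hx
    refine hasDerivAt_of_tendstoLocallyUniformlyOn hSopen
      hTU2.tendstoLocallyUniformlyOn hDeriv2 (fun y hy => hTLU.tendsto_at hy) hx
  -- conclude
  have hx0S : x0 ∈ S := hx0
  have hEq : Set.EqOn (deriv (fun y => Real.log (Real.Gamma y))) ψ S :=
    fun y hy => (step1 y hy).deriv
  have hEvEq : deriv (fun y => Real.log (Real.Gamma y)) =ᶠ[𝓝 x0] ψ :=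
    Filter.eventuallyEq_of_mem (hSopen.mem_nhds hx0S) hEq
  have : trigamma x0 = deriv (deriv (fun y => Real.log (Real.Gamma y))) x0 := by
    rw [trigamma, iteratedDeriv_succ, iteratedDeriv_one]
  rw [this, hEvEq.deriv_eq, (step2 x0 hx0S).deriv]

lemma sn_sub_sn (j : ℕ) (hj : 1 ≤ j) : sn j - sn (j+1) = gseq j := by
  have hj0 : (0:ℝ) < (j:ℝ) := by exact_mod_cast hj
  simp only [sn, gseq, Nat.factorial_succ, Nat.cast_mul, Nat.cast_add, Nat.cast_one]
  rw [Real.log_mul (by positivity) (by positivity)]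
  push_cast
  ring
lemma sum_gseq (n : ℕ) (hn : 1 ≤ n) (N : ℕ) :
    ∑ k ∈ Finset.range N, gseq (n + k) = sn n - sn (n + N) := by
  induction N with
  | zero => simp
  | succ N ih =>
    rw [Finset.sum_range_succ, ih, ← sn_sub_sn (n+N) (le_add_right hn)]
    push_cast
    ring_nf
lemma log_stirling (m : ℕ) (hm : 1 ≤ m) :
    Real.log (Stirling.stirlingSeq m) = Real.log m.factorial - (1/2)*Real.log (2*m)
      - m * Real.log m + m := by
  have hm0 : (0:ℝ) < (m:ℝ) := by exact_mod_cast hm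
  rw [Stirling.stirlingSeq, Real.log_div (by positivity) (by positivity),
    Real.log_mul (by positivity) (by positivity), Real.log_pow,
    Real.log_sqrt (by positivity), Real.log_div (by positivity) (Real.exp_ne_zero 1),
    Real.log_exp]
  ring
lemma tendsto_sn : Tendsto sn atTop (𝓝 0) := by
  have h1 : Tendsto (fun m => Real.log (Stirling.stirlingSeq m)) atTop
      (𝓝 (Real.log (Real.sqrt π))) :=
    ((Real.continuousAt_log (by positivity)).tendsto).comp Stirling.tendsto_stirlingSeq_sqrt_pi
  have heq : ∀ᶠ m in atTop, Real.log (Stirling.stirlingSeq m) - Real.log (Real.sqrt π) = sn m := by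
    filter_upwards [eventually_ge_atTop 1] with m hm
    have hm0 : (0:ℝ) < (m:ℝ) := by exact_mod_cast hm
    rw [log_stirling m hm, sn, Real.log_sqrt Real.pi_pos.le,
      Real.log_sqrt (by positivity), Real.log_mul (by norm_num) hm0.ne',
      Real.log_mul (by norm_num) Real.pi_pos.ne']
    ring
  have h2 := h1.sub (tendsto_const_nhds : Tendsto (fun _ : ℕ => Real.log (Real.sqrt π)) atTop _)
  rw [sub_self] at h2
  exact Tendsto.congr' heq h2
lemma gseq_nonneg' (j : ℕ) (hj : 1 ≤ j) : 0 ≤ gseq j := by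
  have h := gseq_lower j hj
  have h1 : (0:ℝ) < 1/(2*(j:ℝ)+1) := by positivity
  nlinarith [pow_pos h1 2, pow_pos h1 4, pow_pos h1 6]

lemma sn_nonneg (n : ℕ) (hn : 1 ≤ n) : 0 ≤ sn n := by
  have h1 : ∀ N, sn (n + N) ≤ sn n := by
    intro N
    have := sum_gseq n hn N
    have h2 : 0 ≤ ∑ k ∈ Finset.range N, gseq (n + k) :=
      Finset.sum_nonneg fun k _ => gseq_nonneg' (n+k) (le_add_right hn)
    linarith
  have h3 : Tendsto (fun N => sn (n + N)) atTop (𝓝 0) := by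
    simpa [add_comm, Function.comp_def] using tendsto_sn.comp (tendsto_add_atTop_nat n)
  exact le_of_tendsto h3 (Eventually.of_forall h1)

lemma hasSum_gseq (n : ℕ) (hn : 1 ≤ n) : HasSum (fun k : ℕ => gseq (n + k)) (sn n) := by
  rw [hasSum_iff_tendsto_nat_of_nonneg (fun k => gseq_nonneg' (n+k) (le_add_right hn))]
  have h4 : Tendsto (fun N => sn (n + N)) atTop (𝓝 0) := by
    simpa [add_comm, Function.comp_def] using tendsto_sn.comp (tendsto_add_atTop_nat n)
  have h3 : Tendsto (fun N => sn n - sn (n + N)) atTop (𝓝 (sn n - 0)) :=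
    tendsto_const_nhds.sub h4
  rw [sub_zero] at h3
  exact Tendsto.congr (fun N => (sum_gseq n hn N).symm) h3

lemma Pfun_nonneg_sub (j : ℕ) (hj : 1 ≤ j) : 0 ≤ Pfun j - Pfun (j+1) := by
  have ht : (1:ℝ) ≤ (j:ℝ) := by exact_mod_cast hj
  set t := (j:ℝ) with hT
  have hkey : Pfun j - Pfun (j+1)
      = (84*t^6+252*t^5+225*t^4+30*t^3-82*t^2-55*t-11)/(6720*(t^5*(t+1)^5)) := by
    rw [Pfun, Pfun]
    push_cast
    have h1 : t ≠ 0 := by linarith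
    have h2 : t + 1 ≠ 0 := by linarith
    field_simp
    ring
  rw [hkey]
  apply div_nonneg _ (by positivity)
  nlinarith [sq_nonneg t, sq_nonneg (t-1), pow_pos (show (0:ℝ) < t by linarith) 3,
    pow_pos (show (0:ℝ) < t by linarith) 4]

lemma perterm (j : ℕ) (hj : 1 ≤ j) :
    Pfun j - Pfun (j+1) < gseq j - (1/12) * (1/((j:ℝ)+1/2)^2) := by
  have ht : (1:ℝ) ≤ (j:ℝ) := by exact_mod_cast hj
  have hg := gseq_lower j hj
  set t := (j:ℝ) with hT
  have h12 : (1/12) * (1/(t+1/2)^2) = (1/(2*t+1))^2/3 := by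
    have h2 : (2*t+1) ≠ 0 := by linarith
    field_simp
    ring
  have hpoly : Pfun j - Pfun (j+1) < (1/(2*t+1))^4/5 + (1/(2*t+1))^6/7 := by
    rw [← sub_pos]
    have h1 : t ≠ 0 := by linarith
    have h2 : t + 1 ≠ 0 := by linarith
    have h3 : 2*t+1 ≠ 0 := by linarith
    have key : (1/(2*t+1))^4/5 + (1/(2*t+1))^6/7 - (Pfun j - Pfun (j+1))
        = (3808*t^8 + 15232*t^7 + 26432*t^6 + 25984*t^5 + 15775*t^4 + 6014*t^3
            + 1402*t^2 + 187*t + 11) / (6720 * (t^5*(t+1)^5*(2*t+1)^6)) := by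
      rw [Pfun, Pfun]
      push_cast
      field_simp
      ring
    rw [key]
    have hnum : (0:ℝ) < 3808*t^8 + 15232*t^7 + 26432*t^6 + 25984*t^5 + 15775*t^4 + 6014*t^3
        + 1402*t^2 + 187*t + 11 := by positivity
    positivity
  linarith [h12, hg]

lemma tendsto_Pfun : Tendsto Pfun atTop (𝓝 0) := by
  have h3 : Tendsto (fun m : ℕ => ((m:ℝ))⁻¹) atTop (𝓝 0) := tendsto_inv_atTop_nhds_zero_nat
  have h := ((h3.pow 3).const_mul (1/240:ℝ)).sub ((h3.pow 5).const_mul (11/6720:ℝ))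
  norm_num at h
  apply h.congr'
  filter_upwards [eventually_ge_atTop 1] with m hm
  have hm0 : ((m:ℝ)) ≠ 0 := by
    have : (1:ℝ) ≤ (m:ℝ) := by exact_mod_cast hm
    linarith
  rw [Pfun]
  field_simp

lemma hasSum_Pfun (n : ℕ) (hn : 1 ≤ n) :
    HasSum (fun k : ℕ => Pfun (n+k) - Pfun (n+k+1)) (Pfun n) := by
  rw [hasSum_iff_tendsto_nat_of_nonneg (fun k => Pfun_nonneg_sub (n+k) (le_add_right hn))]
  have hsum : ∀ N, ∑ k ∈ Finset.range N, (Pfun (n+k) - Pfun (n+k+1)) = Pfun n - Pfun (n+N) := by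
    intro N
    have := Finset.sum_range_sub' (fun i => Pfun (n+i)) N
    simpa [add_assoc] using this
  have h4 : Tendsto (fun N => Pfun (n + N)) atTop (𝓝 0) := by
    simpa [add_comm, Function.comp_def] using tendsto_Pfun.comp (tendsto_add_atTop_nat n)
  have h3 : Tendsto (fun N => Pfun n - Pfun (n + N)) atTop (𝓝 (Pfun n - 0)) :=
    tendsto_const_nhds.sub h4
  rw [sub_zero] at h3
  exact Tendsto.congr (fun N => (hsum N).symm) h3

theorem stmt1 (n : ℕ) (hn : 1 ≤ n) :
    Real.exp (1 / (240 * (n : ℝ) ^ 3) - 11 / (6720 * (n : ℝ) ^ 5)) <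
    Real.exp n * (n.factorial : ℝ) /
      ((n : ℝ) ^ n * Real.sqrt (2 * Real.pi * n) * Real.exp (trigamma (n + 1/2) / 12)) := by
  have hn1 : (1:ℝ) ≤ (n:ℝ) := by exact_mod_cast hn
  have hn0 : (0:ℝ) < (n:ℝ) := by linarith
  set x : ℝ := (n:ℝ) + 1/2 with hx
  have hx1 : 1 < x := by rw [hx]; linarith
  -- HasSum for the trigamma series
  have htri0 : HasSum (fun m : ℕ => 1/(x+m)^2) (trigamma x) := by
    rw [trigamma_eq hx1]
    exact (summable_trigamma hx1).hasSum
  have htri : HasSum (fun k : ℕ => (1/12) * (1/(((n+k : ℕ):ℝ)+1/2)^2)) (trigamma x / 12) := by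
    have h := htri0.mul_left (1/12)
    have heq : (fun m : ℕ => (1/12) * (1/(x+m)^2))
        = fun k : ℕ => (1/12) * (1/(((n+k : ℕ):ℝ)+1/2)^2) := by
      funext k
      rw [hx]
      push_cast
      ring_nf
    rw [heq] at h
    rw [show trigamma x / 12 = 1 / 12 * trigamma x by ring]
    exact h
  have ha : HasSum (fun k : ℕ => gseq (n+k) - (1/12) * (1/(((n+k : ℕ):ℝ)+1/2)^2))
      (sn n - trigamma x / 12) := (hasSum_gseq n hn).sub htri
  have hb := hasSum_Pfun n hn
  -- compare
  have hcomp : ∀ k : ℕ, Pfun (n+k) - Pfun (n+k+1)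
      ≤ gseq (n+k) - (1/12) * (1/(((n+k : ℕ):ℝ)+1/2)^2) :=
    fun k => (perterm (n+k) (le_add_right hn)).le
  have hstrict : Pfun (n+0) - Pfun (n+0+1)
      < gseq (n+0) - (1/12) * (1/(((n+0 : ℕ):ℝ)+1/2)^2) := perterm (n+0) (le_add_right hn)
  have hmain : Pfun n < sn n - trigamma x / 12 := by
    have := Summable.tsum_lt_tsum hcomp hstrict hb.summable ha.summable
    rwa [hb.tsum_eq, ha.tsum_eq] at this
  -- rewrite the RHS as an exponential
  have hfac : (0:ℝ) < (n.factorial : ℝ) := by exact_mod_cast n.factorial_pos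
  have hRHS : Real.exp n * (n.factorial : ℝ) /
      ((n : ℝ) ^ n * Real.sqrt (2 * Real.pi * n) * Real.exp (trigamma x / 12))
      = Real.exp (sn n - trigamma x / 12) := by
    have h1 : (n:ℝ) ^ n = Real.exp ((n:ℝ) * Real.log n) := by
      rw [Real.exp_nat_mul, Real.exp_log hn0]
    have h2 : Real.sqrt (2 * Real.pi * n)
        = Real.exp (Real.log (Real.sqrt (2*Real.pi)) + (1/2) * Real.log n) := by
      rw [Real.exp_add, Real.exp_log (by positivity)]
      rw [show (1/2) * Real.log (n:ℝ) = Real.log ((n:ℝ) ^ ((1:ℝ)/2)) by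
        rw [Real.log_rpow hn0]]
      rw [Real.exp_log (by positivity)]
      rw [Real.sqrt_mul (by positivity), Real.sqrt_eq_rpow (n:ℝ)]
    have h3 : (n.factorial : ℝ) = Real.exp (Real.log n.factorial) := (Real.exp_log hfac).symm
    rw [h1, h2, h3, ← Real.exp_add, ← Real.exp_add, ← Real.exp_add, ← Real.exp_sub]
    congr 1
    rw [sn]
    ring
  rw [hRHS]
  apply Real.exp_lt_exp.mpr
  have : (1:ℝ) / (240 * (n : ℝ) ^ 3) - 11 / (6720 * (n : ℝ) ^ 5) = Pfun n := by
    rw [Pfun]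
  rw [this]
  exact hmain
end

section
/- The function u(x) = 1 + ln(x+1) - (x + 3/2)·ln(x+1) + (x + 1/2)·ln x + 1/(12(x+1/2)^2) - 1/(240(x+1)^3) + 1/(240x^3) satisfies u''(x) = (1 + 13x + 74x^2 + 232x^3 + 391x^4 + 330x^5 + 110x^6)/(20·x^5·(x+1)^5·(2x+1)^4) for all x > 0, and hence u is strictly convex on (0,∞). -/
open Real Set

noncomputable def uu : ℝ → ℝ := fun x : ℝ => 1 + Real.log (x + 1) - (x + 3/2) * Real.log (x + 1) + (x + 1/2) * Real.log x
    + 1 / (12 * (x + 1/2) ^ 2) - 1 / (240 * (x + 1) ^ 3) + 1 / (240 * x ^ 3)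

noncomputable def vv : ℝ → ℝ := fun x =>
  1/(x+1) - (Real.log (x+1) + (x+3/2)/(x+1)) + (Real.log x + (x+1/2)/x)
    - 1/(6*(x+1/2)^3) + 1/(80*(x+1)^4) - 1/(80*x^4)

noncomputable def ww : ℝ → ℝ := fun x =>
  -1/(x+1)^2 - (1/(x+1) - 1/(2*(x+1)^2)) + (1/x - 1/(2*x^2))
    + 1/(2*(x+1/2)^4) - 1/(20*(x+1)^5) + 1/(20*x^5)

lemma hu (x : ℝ) (hx : 0 < x) : HasDerivAt uu (vv x) x := by
  have h1 : (x:ℝ) + 1 ≠ 0 := by positivity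
  have h2 : (x:ℝ) ≠ 0 := ne_of_gt hx
  have h3 : (12:ℝ) * (x + 1/2) ^ 2 ≠ 0 := by positivity
  have h4 : (240:ℝ) * (x + 1) ^ 3 ≠ 0 := by positivity
  have h5 : (240:ℝ) * x ^ 3 ≠ 0 := by positivity
  have hid := hasDerivAt_id x
  have hx1 : HasDerivAt (fun y : ℝ => y + 1) 1 x := hid.add_const 1
  have hlog1 : HasDerivAt (fun y : ℝ => Real.log (y + 1)) (1 / (x + 1)) x := by
    simpa using hx1.log h1
  have hlogx : HasDerivAt (fun y : ℝ => Real.log y) (1 / x) x := by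
    simpa [one_div] using Real.hasDerivAt_log h2
  have hA : HasDerivAt (fun y : ℝ => (y + 3/2) * Real.log (y + 1))
      (1 * Real.log (x + 1) + (x + 3/2) * (1 / (x + 1))) x :=
    (hid.add_const (3/2)).mul hlog1
  have hB : HasDerivAt (fun y : ℝ => (y + 1/2) * Real.log y)
      (1 * Real.log x + (x + 1/2) * (1 / x)) x :=
    (hid.add_const (1/2)).mul hlogx
  have hden1 : HasDerivAt (fun y : ℝ => 12 * (y + 1/2) ^ 2) (12 * (2 * (x + 1/2) ^ 1 * 1)) x := by
    exact (((hid.add_const (1/2)).pow 2).const_mul 12)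
  have hC : HasDerivAt (fun y : ℝ => 1 / (12 * (y + 1/2) ^ 2))
      ((0 * (12 * (x + 1/2) ^ 2) - 1 * (12 * (2 * (x + 1/2) ^ 1 * 1))) / (12 * (x + 1/2) ^ 2) ^ 2) x :=
    (hasDerivAt_const x 1).div hden1 h3
  have hden2 : HasDerivAt (fun y : ℝ => 240 * (y + 1) ^ 3) (240 * (3 * (x + 1) ^ 2 * 1)) x :=
    ((hx1.pow 3).const_mul 240)
  have hD : HasDerivAt (fun y : ℝ => 1 / (240 * (y + 1) ^ 3))
      ((0 * (240 * (x + 1) ^ 3) - 1 * (240 * (3 * (x + 1) ^ 2 * 1))) / (240 * (x + 1) ^ 3) ^ 2) x :=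
    (hasDerivAt_const x 1).div hden2 h4
  have hden3 : HasDerivAt (fun y : ℝ => 240 * y ^ 3) (240 * (3 * x ^ 2 * 1)) x :=
    ((hid.pow 3).const_mul 240)
  have hE : HasDerivAt (fun y : ℝ => 1 / (240 * y ^ 3))
      ((0 * (240 * x ^ 3) - 1 * (240 * (3 * x ^ 2 * 1))) / (240 * x ^ 3) ^ 2) x :=
    (hasDerivAt_const x 1).div hden3 h5
  have h := ((((((hasDerivAt_const x (1:ℝ)).add hlog1).sub hA).add hB).add hC).sub hD).add hE
  refine h.congr_deriv ?_
  have hx2 : (x:ℝ) + 1/2 ≠ 0 := by positivity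
  simp only [vv]
  field_simp
  ring

lemma hv (x : ℝ) (hx : 0 < x) : HasDerivAt vv (ww x) x := by
  have h1 : (x:ℝ) + 1 ≠ 0 := by positivity
  have h2 : (x:ℝ) ≠ 0 := ne_of_gt hx
  have h3 : (6:ℝ) * (x + 1/2) ^ 3 ≠ 0 := by positivity
  have h4 : (80:ℝ) * (x + 1) ^ 4 ≠ 0 := by positivity
  have h5 : (80:ℝ) * x ^ 4 ≠ 0 := by positivity
  have hid := hasDerivAt_id x
  have hx1 : HasDerivAt (fun y : ℝ => y + 1) 1 x := hid.add_const 1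
  have hlog1 : HasDerivAt (fun y : ℝ => Real.log (y + 1)) (1 / (x + 1)) x := by
    simpa using hx1.log h1
  have hlogx : HasDerivAt (fun y : ℝ => Real.log y) (1 / x) x := by
    simpa [one_div] using Real.hasDerivAt_log h2
  have hA : HasDerivAt (fun y : ℝ => 1 / (y + 1))
      ((0 * (x + 1) - 1 * 1) / (x + 1) ^ 2) x := (hasDerivAt_const x 1).div hx1 h1
  have hB : HasDerivAt (fun y : ℝ => (y + 3/2) / (y + 1))
      ((1 * (x + 1) - (x + 3/2) * 1) / (x + 1) ^ 2) x := (hid.add_const (3/2)).div hx1 h1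
  have hC : HasDerivAt (fun y : ℝ => (y + 1/2) / y)
      ((1 * x - (x + 1/2) * 1) / x ^ 2) x := (hid.add_const (1/2)).div hid h2
  have hden1 : HasDerivAt (fun y : ℝ => 6 * (y + 1/2) ^ 3) (6 * (3 * (x + 1/2) ^ 2 * 1)) x :=
    (((hid.add_const (1/2)).pow 3).const_mul 6)
  have hD : HasDerivAt (fun y : ℝ => 1 / (6 * (y + 1/2) ^ 3))
      ((0 * (6 * (x + 1/2) ^ 3) - 1 * (6 * (3 * (x + 1/2) ^ 2 * 1))) / (6 * (x + 1/2) ^ 3) ^ 2) x :=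
    (hasDerivAt_const x 1).div hden1 h3
  have hden2 : HasDerivAt (fun y : ℝ => 80 * (y + 1) ^ 4) (80 * (4 * (x + 1) ^ 3 * 1)) x :=
    ((hx1.pow 4).const_mul 80)
  have hE : HasDerivAt (fun y : ℝ => 1 / (80 * (y + 1) ^ 4))
      ((0 * (80 * (x + 1) ^ 4) - 1 * (80 * (4 * (x + 1) ^ 3 * 1))) / (80 * (x + 1) ^ 4) ^ 2) x :=
    (hasDerivAt_const x 1).div hden2 h4
  have hden3 : HasDerivAt (fun y : ℝ => 80 * y ^ 4) (80 * (4 * x ^ 3 * 1)) x :=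
    ((hid.pow 4).const_mul 80)
  have hF : HasDerivAt (fun y : ℝ => 1 / (80 * y ^ 4))
      ((0 * (80 * x ^ 4) - 1 * (80 * (4 * x ^ 3 * 1))) / (80 * x ^ 4) ^ 2) x :=
    (hasDerivAt_const x 1).div hden3 h5
  have h := ((((hA.sub (hlog1.add hB)).add (hlogx.add hC)).sub hD).add hE).sub hF
  refine h.congr_deriv ?_
  have hx2 : (x:ℝ) + 1/2 ≠ 0 := by positivity
  simp only [ww]
  field_simp
  ring

lemma deriv2_eq (x : ℝ) (hx : 0 < x) :
    deriv (deriv uu) x =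
      (1 + 13*x + 74*x^2 + 232*x^3 + 391*x^4 + 330*x^5 + 110*x^6) /
        (20 * x^5 * (x+1)^5 * (2*x+1)^4) := by
  have heq : deriv uu =ᶠ[nhds x] vv :=
    Filter.eventuallyEq_of_mem (Ioi_mem_nhds hx) (fun y hy => (hu y hy).deriv)
  rw [heq.deriv_eq, (hv x hx).deriv]
  have h1 : (x:ℝ) + 1 ≠ 0 := by positivity
  have h2 : (x:ℝ) ≠ 0 := ne_of_gt hx
  have hx2 : (x:ℝ) + 1/2 ≠ 0 := by positivity
  have hx3 : (2:ℝ) * x + 1 ≠ 0 := by positivity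
  simp only [ww]
  field_simp
  ring

theorem stmt5 :
    (∀ x : ℝ, 0 < x →
      deriv (deriv (fun x : ℝ => 1 + Real.log (x + 1) - (x + 3/2) * Real.log (x + 1) + (x + 1/2) * Real.log x
    + 1 / (12 * (x + 1/2) ^ 2) - 1 / (240 * (x + 1) ^ 3) + 1 / (240 * x ^ 3))) x =
        (1 + 13*x + 74*x^2 + 232*x^3 + 391*x^4 + 330*x^5 + 110*x^6) /
          (20 * x^5 * (x+1)^5 * (2*x+1)^4)) ∧
    StrictConvexOn ℝ (Ioi (0:ℝ)) (fun x : ℝ => 1 + Real.log (x + 1) - (x + 3/2) * Real.log (x + 1) + (x + 1/2) * Real.log x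
    + 1 / (12 * (x + 1/2) ^ 2) - 1 / (240 * (x + 1) ^ 3) + 1 / (240 * x ^ 3)) := by
  have hfu : (fun x : ℝ => 1 + Real.log (x + 1) - (x + 3/2) * Real.log (x + 1) + (x + 1/2) * Real.log x
    + 1 / (12 * (x + 1/2) ^ 2) - 1 / (240 * (x + 1) ^ 3) + 1 / (240 * x ^ 3)) = uu := rfl
  rw [hfu]
  refine ⟨fun x hx => deriv2_eq x hx, ?_⟩
  apply strictConvexOn_of_deriv2_pos (convex_Ioi 0)
  · exact fun x hx => (hu x hx).continuousAt.continuousWithinAt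
  · intro x hx
    rw [interior_Ioi] at hx
    have := deriv2_eq x hx
    simp only [Function.iterate_succ, Function.iterate_zero, Function.comp_apply, id] at *
    rw [this]
    have hx' : (0:ℝ) < x := hx
    positivity
end

section
/- The function u(x) = 1 + ln(x+1) - (x + 3/2)·ln(x+1) + (x + 1/2)·ln x + 1/(12(x+1/2)^2) - 1/(240(x+1)^3) + 1/(240x^3) is positive for all x > 0. -/
open Real

/-- auxiliary function -/
noncomputable def fA (t : ℝ) : ℝ :=
  2*(t + t^3/3 + t^5/(5*(1-t^2))) - (Real.log (1+t) - Real.log (1-t))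

lemma fA_hasDeriv {t : ℝ} (h1 : -1 < t) (h2 : t < 1) :
    HasDerivAt fA (4*t^6/(5*(1-t^2)^2)) t := by
  have hne : (1:ℝ) - t^2 ≠ 0 := by nlinarith
  have h1t : (1:ℝ) + t ≠ 0 := by linarith
  have h2t : (1:ℝ) - t ≠ 0 := by linarith
  have hd1 : HasDerivAt (fun t : ℝ => Real.log (1+t)) (1/(1+t)) t := by
    have := (Real.hasDerivAt_log h1t).comp t ((hasDerivAt_id t).const_add 1)
    simp at this ⊢; exact this
  have hd2 : HasDerivAt (fun t : ℝ => Real.log (1-t)) (-(1/(1-t))) t := by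
    have := (Real.hasDerivAt_log h2t).comp t ((hasDerivAt_id t).neg.const_add 1)
    simp [div_eq_mul_inv] at this ⊢; exact this
  have hd3 : HasDerivAt (fun t : ℝ => t^5/(5*(1-t^2)))
      ((5*t^4*(5*(1-t^2)) - t^5*(5*(-(2*t))))/(5*(1-t^2))^2) t := by
    have hden : HasDerivAt (fun t : ℝ => 5*(1-t^2)) (5*(-(2*t))) t := by
      have : HasDerivAt (fun t : ℝ => 1-t^2) (-(2*t)) t := by
        exact ((hasDerivAt_pow 2 t).const_sub 1).congr_deriv (by norm_num)
      simpa using this.const_mul 5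
    have hnum : HasDerivAt (fun t : ℝ => t^5) (5*t^4) t := by
      simpa using hasDerivAt_pow 5 t
    exact hnum.div hden (by intro h; exact hne (by linarith [mul_left_cancel₀ (by norm_num : (5:ℝ)≠0) (by linarith : 5*(1-t^2)=5*0)]))
  have hd4 : HasDerivAt (fun t : ℝ => t + t^3/3 + t^5/(5*(1-t^2)))
      (1 + 3*t^2/3 + (5*t^4*(5*(1-t^2)) - t^5*(5*(-(2*t))))/(5*(1-t^2))^2) t := by
    have hcube : HasDerivAt (fun t : ℝ => t^3/3) (3*t^2/3) t := by
      simpa using (hasDerivAt_pow 3 t).div_const 3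
    exact ((hasDerivAt_id t).add hcube).add hd3
  have := ((hd4.const_mul 2).sub (hd1.sub hd2))
  refine this.congr_deriv ?_
  field_simp
  ring

lemma key {t : ℝ} (h0 : 0 < t) (h1 : t < 1) :
    Real.log (1+t) - Real.log (1-t) < 2*(t + t^3/3 + t^5/(5*(1-t^2))) := by
  have hmono : StrictMonoOn fA (Set.Icc 0 t) := by
    apply strictMonoOn_of_deriv_pos (convex_Icc 0 t)
    · intro y hy
      simp only [Set.mem_Icc] at hy
      exact (fA_hasDeriv (by linarith [hy.1]) (by linarith [hy.2])).continuousAt.continuousWithinAt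
    · intro y hy
      rw [interior_Icc, Set.mem_Ioo] at hy
      rw [(fA_hasDeriv (by linarith [hy.1]) (by linarith [hy.2])).deriv]
      have : (0:ℝ) < 1 - y^2 := by nlinarith [hy.1, hy.2]
      have h4 : (0:ℝ) < 4*y^6 := by have := pow_pos hy.1 6; linarith
      have h5 : (0:ℝ) < 5*(1-y^2)^2 := by positivity
      exact div_pos h4 h5
  have h := hmono (Set.left_mem_Icc.mpr h0.le) (Set.right_mem_Icc.mpr h0.le) h0
  have hf0 : fA 0 = 0 := by simp [fA]
  rw [hf0] at h
  unfold fA at h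
  linarith

theorem stmt6 (x : ℝ) (hx : 0 < x) :
    0 < (fun x : ℝ => 1 + Real.log (x + 1) - (x + 3/2) * Real.log (x + 1) + (x + 1/2) * Real.log x
    + 1 / (12 * (x + 1/2) ^ 2) - 1 / (240 * (x + 1) ^ 3) + 1 / (240 * x ^ 3)) x := by
  simp only
  have hden : (0:ℝ) < 2*x+1 := by linarith
  have hx1 : (0:ℝ) < x + 1 := by linarith
  have hxh : (0:ℝ) < x + 1/2 := by linarith
  have ht0 : 0 < 1/(2*x+1) := by positivity
  have ht1 : 1/(2*x+1) < 1 := by rw [div_lt_one hden]; linarith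
  have hlog : Real.log (x+1) - Real.log x
      = Real.log (1+1/(2*x+1)) - Real.log (1-1/(2*x+1)) := by
    have e1 : 1 + 1/(2*x+1) = (2*(x+1))/(2*x+1) := by field_simp; ring
    have e2 : 1 - 1/(2*x+1) = (2*x)/(2*x+1) := by field_simp; ring
    rw [e1, e2, Real.log_div (by positivity) hden.ne', Real.log_div (by positivity) hden.ne',
      Real.log_mul (by norm_num) hx1.ne', Real.log_mul (by norm_num) hx.ne']
    ring
  have hmul : (x+1/2)*(Real.log (x+1) - Real.log x)
      < (x+1/2)*(2*(1/(2*x+1) + (1/(2*x+1))^3/3 + (1/(2*x+1))^5/(5*(1-(1/(2*x+1))^2)))) := by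
    rw [hlog]
    exact mul_lt_mul_of_pos_left (key ht0 ht1) (by linarith)
  have h1mt : (0:ℝ) < 1 - (1/(2*x+1))^2 := by nlinarith
  have heq : (x+1/2)*(2*(1/(2*x+1) + (1/(2*x+1))^3/3 + (1/(2*x+1))^5/(5*(1-(1/(2*x+1))^2))))
      = 1 + 1 / (12 * (x + 1/2) ^ 2) + 1/(80*((x+1/2)^2)*(x^2+x)) := by
    have hxx : (0:ℝ) < x^2 + x := by positivity
    have e3 : 1 - (1/(2*x+1))^2 = (4*(x^2+x))/(2*x+1)^2 := by
      field_simp; ring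
    rw [e3]
    field_simp
    ring
  have hineq : 1/(80*((x+1/2)^2)*(x^2+x)) ≤ 1 / (240 * x ^ 3) - 1 / (240 * (x + 1) ^ 3) := by
    rw [div_sub_div _ _ (by positivity) (by positivity),
      div_le_div_iff₀ (by positivity) (by positivity)]
    nlinarith [sq_nonneg (x^2+x), mul_pos hx hx1, sq_nonneg x]
  have hrw : 1 + Real.log (x + 1) - (x + 3/2) * Real.log (x + 1) + (x + 1/2) * Real.log x
      = 1 - (x+1/2)*(Real.log (x+1) - Real.log x) := by ring
  linarith [hmul, heq, hineq, hrw]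
end

section
/- The function v(x) = 1 + ln(x+1) - (x + 3/2)·ln(x+1) + (x + 1/2)·ln x + 1/(12(x+1/2)^2) - 1/(240(x+1)^3) + 1/(240x^3) + 11/(6720(x+1)^5) - 11/(6720x^5) is negative for all x > 0. -/
open Real

lemma logbound7 (t : ℝ) (ht0 : 0 < t) (ht1 : t < 1) :
    2*t + 2*t^3/3 + 2*t^5/5 + 2*t^7/7 < Real.log (1+t) - Real.log (1-t) := by
  have key : StrictMonoOn
      (fun s : ℝ => Real.log (1+s) - Real.log (1-s) - (2*s + 2*s^3/3 + 2*s^5/5 + 2*s^7/7))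
      (Set.Icc 0 t) := by
    apply strictMonoOn_of_deriv_pos (convex_Icc 0 t)
    · apply ContinuousOn.sub
      apply ContinuousOn.sub
      · apply ContinuousOn.log (by fun_prop)
        intro s hs
        have := hs.1
        nlinarith
      · apply ContinuousOn.log (by fun_prop)
        intro s hs
        have h1 := hs.2
        have : s < 1 := lt_of_le_of_lt h1 ht1
        nlinarith
      · fun_prop
    · intro s hs
      rw [interior_Icc] at hs
      have hs0 : 0 < s := hs.1
      have hs1 : s < 1 := lt_trans hs.2 ht1
      have h1p : (0:ℝ) < 1 + s := by linarith
      have h1m : (0:ℝ) < 1 - s := by linarith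
      have hA : HasDerivAt (fun s : ℝ => Real.log (1+s)) (1/(1+s)) s := by
        simpa using ((hasDerivAt_id s).const_add 1).log h1p.ne'
      have hB : HasDerivAt (fun s : ℝ => Real.log (1-s)) ((-1)/(1-s)) s := by
        simpa using ((hasDerivAt_id s).const_sub 1).log h1m.ne'
      have hC : HasDerivAt (fun s : ℝ => 2*s + 2*s^3/3 + 2*s^5/5 + 2*s^7/7)
          (2 + 2*s^2 + 2*s^4 + 2*s^6) s := by
        have h1 := (hasDerivAt_id s).const_mul (2:ℝ)
        have h3 := ((hasDerivAt_pow 3 s).const_mul (2:ℝ)).div_const 3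
        have h5 := ((hasDerivAt_pow 5 s).const_mul (2:ℝ)).div_const 5
        have h7 := ((hasDerivAt_pow 7 s).const_mul (2:ℝ)).div_const 7
        exact (((h1.add h3).add h5).add h7).congr_deriv (by norm_num; ring)
      have hD : HasDerivAt
          (fun s : ℝ => Real.log (1+s) - Real.log (1-s) - (2*s + 2*s^3/3 + 2*s^5/5 + 2*s^7/7))
          (2*s^8/((1+s)*(1-s))) s := by
        exact ((hA.sub hB).sub hC).congr_deriv (by field_simp; ring)
      rw [hD.deriv]
      positivity
  have h := key (Set.left_mem_Icc.mpr ht0.le) (Set.right_mem_Icc.mpr ht0.le) ht0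
  simp only [Real.log_one, add_zero, sub_zero] at h
  norm_num at h
  linarith

set_option maxHeartbeats 2000000 in
theorem stmt7 (x : ℝ) (hx : 0 < x) :
    (fun x : ℝ => 1 + Real.log (x + 1) - (x + 3/2) * Real.log (x + 1) + (x + 1/2) * Real.log x
    + 1 / (12 * (x + 1/2) ^ 2) - 1 / (240 * (x + 1) ^ 3) + 1 / (240 * x ^ 3)
    + 11 / (6720 * (x + 1) ^ 5) - 11 / (6720 * x ^ 5)) x < 0 := by
  simp only
  set t : ℝ := 1/(2*x+1) with ht
  have hx1 : (0:ℝ) < x + 1 := by linarith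
  have h2x1 : (0:ℝ) < 2*x + 1 := by linarith
  have ht0 : 0 < t := by positivity
  have ht1 : t < 1 := by
    rw [ht, div_lt_one h2x1]; linarith
  have hlb := logbound7 t ht0 ht1
  -- rewrite log(1+t) - log(1-t) = log(x+1) - log x
  have h1t : (1:ℝ) + t = (2*(x+1))/(2*x+1) := by
    rw [ht]; field_simp; ring
  have h2t : (1:ℝ) - t = (2*x)/(2*x+1) := by
    rw [ht]; field_simp; ring
  have hlogeq : Real.log (1+t) - Real.log (1-t) = Real.log (x+1) - Real.log x := by
    rw [h1t, h2t, Real.log_div (by positivity) h2x1.ne', Real.log_div (by positivity) h2x1.ne',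
      Real.log_mul two_ne_zero hx1.ne', Real.log_mul two_ne_zero hx.ne']
    ring
  rw [hlogeq] at hlb
  -- main chain
  have hhalf : (0:ℝ) < x + 1/2 := by linarith
  have hstep : 1 + Real.log (x + 1) - (x + 3/2) * Real.log (x + 1) + (x + 1/2) * Real.log x
      + 1 / (12 * (x + 1/2) ^ 2) - 1 / (240 * (x + 1) ^ 3) + 1 / (240 * x ^ 3)
      + 11 / (6720 * (x + 1) ^ 5) - 11 / (6720 * x ^ 5)
      < 1 - (x + 1/2) * (2*t + 2*t^3/3 + 2*t^5/5 + 2*t^7/7)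
      + 1 / (12 * (x + 1/2) ^ 2) - 1 / (240 * (x + 1) ^ 3) + 1 / (240 * x ^ 3)
      + 11 / (6720 * (x + 1) ^ 5) - 11 / (6720 * x ^ 5) := by
    have h := mul_lt_mul_of_pos_left hlb hhalf
    nlinarith [h]
  refine lt_of_lt_of_le hstep ?_
  -- rational function inequality
  have hpoly : (0:ℝ) ≤ 11 + 187*x + 1402*x^2 + 6014*x^3 + 15775*x^4 + 25984*x^5
      + 26432*x^6 + 15232*x^7 + 3808*x^8 := by positivity
  have hQ : (0:ℝ) < 6720 * x^5 * (x+1)^5 * (2*x+1)^6 := by positivity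
  have hkey : 1 - (x + 1/2) * (2*t + 2*t^3/3 + 2*t^5/5 + 2*t^7/7)
      + 1 / (12 * (x + 1/2) ^ 2) - 1 / (240 * (x + 1) ^ 3) + 1 / (240 * x ^ 3)
      + 11 / (6720 * (x + 1) ^ 5) - 11 / (6720 * x ^ 5)
      = -((11 + 187*x + 1402*x^2 + 6014*x^3 + 15775*x^4 + 25984*x^5
      + 26432*x^6 + 15232*x^7 + 3808*x^8)
      / (6720 * x^5 * (x+1)^5 * (2*x+1)^6)) := by
    rw [ht]
    field_simp
    ring
  rw [hkey]
  rw [neg_nonpos]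
  exact div_nonneg hpoly hQ.le
end

section
/- The function v(x) = 1 + ln(x+1) - (x + 3/2)·ln(x+1) + (x + 1/2)·ln x + 1/(12(x+1/2)^2) - 1/(240(x+1)^3) + 1/(240x^3) + 11/(6720(x+1)^5) - 11/(6720x^5) satisfies v''(x) = -Q(x)/(1120·x^7·(x+1)^7·(2x+1)^4) for all x > 0, where Q(x) = 55 + 825x + 5499x^2 + 21325x^3 + 52589x^4 + 83867x^5 + 83881x^6 + 47936x^7 + 11984x^8; hence v is strictly concave on (0,∞). -/
open Real Set

noncomputable def vfun : ℝ → ℝ := fun x : ℝ => 1 + Real.log (x + 1) - (x + 3/2) * Real.log (x + 1) + (x + 1/2) * Real.log x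
    + 1 / (12 * (x + 1/2) ^ 2) - 1 / (240 * (x + 1) ^ 3) + 1 / (240 * x ^ 3)
    + 11 / (6720 * (x + 1) ^ 5) - 11 / (6720 * x ^ 5)

noncomputable def gfun : ℝ → ℝ := fun x : ℝ =>
  1/(x+1) - (Real.log (x+1) + (x+3/2)/(x+1)) + (Real.log x + (x+1/2)/x)
    - 1/(6*(x+1/2)^3) + 1/(80*(x+1)^4) - 1/(80*x^4)
    - 11/(1344*(x+1)^6) + 11/(1344*x^6)

lemma hderiv_v {x : ℝ} (hx : 0 < x) : HasDerivAt vfun (gfun x) x := by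
  have hx0 : x ≠ 0 := ne_of_gt hx
  have hx1 : x + 1 ≠ 0 := by positivity
  have hxh : x + 1/2 ≠ 0 := by positivity
  have hid : HasDerivAt (fun y : ℝ => y + 1) 1 x := (hasDerivAt_id x).add_const 1
  have hlog1 : HasDerivAt (fun y : ℝ => Real.log (y + 1)) ((x+1)⁻¹) x := by
    simpa [Function.comp_def] using (Real.hasDerivAt_log hx1).comp x hid
  have hlog : HasDerivAt Real.log x⁻¹ x := Real.hasDerivAt_log hx0
  have h2 : HasDerivAt (fun y : ℝ => (y + 3/2) * Real.log (y + 1))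
      (1 * Real.log (x+1) + (x+3/2) * (x+1)⁻¹) x :=
    ((hasDerivAt_id x).add_const (3/2)).mul hlog1
  have h3 : HasDerivAt (fun y : ℝ => (y + 1/2) * Real.log y)
      (1 * Real.log x + (x+1/2) * x⁻¹) x :=
    ((hasDerivAt_id x).add_const (1/2)).mul hlog
  have d4 : HasDerivAt (fun y : ℝ => 12 * (y + 1/2)^2) (12 * (2 * (x+1/2)^1 * 1)) x :=
    (((hasDerivAt_id x).add_const (1/2)).pow 2).const_mul 12
  have h4 : HasDerivAt (fun y : ℝ => 1 / (12 * (y + 1/2)^2))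
      ((0 * (12*(x+1/2)^2) - 1 * (12 * (2 * (x+1/2)^1 * 1))) / (12*(x+1/2)^2)^2) x :=
    (hasDerivAt_const x 1).div d4 (by positivity)
  have d5 : HasDerivAt (fun y : ℝ => 240 * (y + 1)^3) (240 * (3 * (x+1)^2 * 1)) x :=
    (((hasDerivAt_id x).add_const 1).pow 3).const_mul 240
  have h5 : HasDerivAt (fun y : ℝ => 1 / (240 * (y + 1)^3))
      ((0 * (240*(x+1)^3) - 1 * (240 * (3 * (x+1)^2 * 1))) / (240*(x+1)^3)^2) x :=
    (hasDerivAt_const x 1).div d5 (by positivity)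
  have d6 : HasDerivAt (fun y : ℝ => 240 * y^3) (240 * (3 * x^2 * 1)) x :=
    ((hasDerivAt_id x).pow 3).const_mul 240
  have h6 : HasDerivAt (fun y : ℝ => 1 / (240 * y^3))
      ((0 * (240*x^3) - 1 * (240 * (3 * x^2 * 1))) / (240*x^3)^2) x :=
    (hasDerivAt_const x 1).div d6 (by positivity)
  have d7 : HasDerivAt (fun y : ℝ => 6720 * (y + 1)^5) (6720 * (5 * (x+1)^4 * 1)) x :=
    (((hasDerivAt_id x).add_const 1).pow 5).const_mul 6720
  have h7 : HasDerivAt (fun y : ℝ => 11 / (6720 * (y + 1)^5))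
      ((0 * (6720*(x+1)^5) - 11 * (6720 * (5 * (x+1)^4 * 1))) / (6720*(x+1)^5)^2) x :=
    (hasDerivAt_const x 11).div d7 (by positivity)
  have d8 : HasDerivAt (fun y : ℝ => 6720 * y^5) (6720 * (5 * x^4 * 1)) x :=
    ((hasDerivAt_id x).pow 5).const_mul 6720
  have h8 : HasDerivAt (fun y : ℝ => 11 / (6720 * y^5))
      ((0 * (6720*x^5) - 11 * (6720 * (5 * x^4 * 1))) / (6720*x^5)^2) x :=
    (hasDerivAt_const x 11).div d8 (by positivity)
  have H := ((((((((hlog1.const_add 1).sub h2).add h3).add h4).sub h5).add h6).add h7).sub h8)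
  refine H.congr_deriv ?_
  unfold gfun
  field_simp
  ring

noncomputable def hfun : ℝ → ℝ := fun x : ℝ =>
  -(55 + 825*x + 5499*x^2 + 21325*x^3 + 52589*x^4 + 83867*x^5 + 83881*x^6
      + 47936*x^7 + 11984*x^8) /
    (1120 * x^7 * (x+1)^7 * (2*x+1)^4)

lemma hderiv_g {x : ℝ} (hx : 0 < x) : HasDerivAt gfun (hfun x) x := by
  have hx0 : x ≠ 0 := ne_of_gt hx
  have hx1 : x + 1 ≠ 0 := by positivity
  have hxh : x + 1/2 ≠ 0 := by positivity
  have h1 : HasDerivAt (fun y : ℝ => 1/(y+1))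
      ((0 * (x+1) - 1 * 1) / (x+1)^2) x :=
    (hasDerivAt_const x 1).div ((hasDerivAt_id x).add_const 1) hx1
  have hlog1 : HasDerivAt (fun y : ℝ => Real.log (y + 1)) ((x+1)⁻¹) x := by
    simpa [Function.comp_def] using (Real.hasDerivAt_log hx1).comp x ((hasDerivAt_id x).add_const 1)
  have h2 : HasDerivAt (fun y : ℝ => (y+3/2)/(y+1))
      ((1 * (x+1) - (x+3/2) * 1) / (x+1)^2) x :=
    ((hasDerivAt_id x).add_const (3/2)).div ((hasDerivAt_id x).add_const 1) hx1
  have h3 : HasDerivAt (fun y : ℝ => (y+1/2)/y)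
      ((1 * x - (x+1/2) * 1) / x^2) x :=
    ((hasDerivAt_id x).add_const (1/2)).div (hasDerivAt_id x) hx0
  have d4 : HasDerivAt (fun y : ℝ => 6 * (y + 1/2)^3) (6 * (3 * (x+1/2)^2 * 1)) x :=
    (((hasDerivAt_id x).add_const (1/2)).pow 3).const_mul 6
  have h4 : HasDerivAt (fun y : ℝ => 1 / (6 * (y + 1/2)^3))
      ((0 * (6*(x+1/2)^3) - 1 * (6 * (3 * (x+1/2)^2 * 1))) / (6*(x+1/2)^3)^2) x :=
    (hasDerivAt_const x 1).div d4 (by positivity)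
  have d5 : HasDerivAt (fun y : ℝ => 80 * (y + 1)^4) (80 * (4 * (x+1)^3 * 1)) x :=
    (((hasDerivAt_id x).add_const 1).pow 4).const_mul 80
  have h5 : HasDerivAt (fun y : ℝ => 1 / (80 * (y + 1)^4))
      ((0 * (80*(x+1)^4) - 1 * (80 * (4 * (x+1)^3 * 1))) / (80*(x+1)^4)^2) x :=
    (hasDerivAt_const x 1).div d5 (by positivity)
  have d6 : HasDerivAt (fun y : ℝ => 80 * y^4) (80 * (4 * x^3 * 1)) x :=
    ((hasDerivAt_id x).pow 4).const_mul 80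
  have h6 : HasDerivAt (fun y : ℝ => 1 / (80 * y^4))
      ((0 * (80*x^4) - 1 * (80 * (4 * x^3 * 1))) / (80*x^4)^2) x :=
    (hasDerivAt_const x 1).div d6 (by positivity)
  have d7 : HasDerivAt (fun y : ℝ => 1344 * (y + 1)^6) (1344 * (6 * (x+1)^5 * 1)) x :=
    (((hasDerivAt_id x).add_const 1).pow 6).const_mul 1344
  have h7 : HasDerivAt (fun y : ℝ => 11 / (1344 * (y + 1)^6))
      ((0 * (1344*(x+1)^6) - 11 * (1344 * (6 * (x+1)^5 * 1))) / (1344*(x+1)^6)^2) x :=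
    (hasDerivAt_const x 11).div d7 (by positivity)
  have d8 : HasDerivAt (fun y : ℝ => 1344 * y^6) (1344 * (6 * x^5 * 1)) x :=
    ((hasDerivAt_id x).pow 6).const_mul 1344
  have h8 : HasDerivAt (fun y : ℝ => 11 / (1344 * y^6))
      ((0 * (1344*x^6) - 11 * (1344 * (6 * x^5 * 1))) / (1344*x^6)^2) x :=
    (hasDerivAt_const x 11).div d8 (by positivity)
  have hlog : HasDerivAt Real.log x⁻¹ x := Real.hasDerivAt_log hx0
  have H := (((((((h1.sub (hlog1.add h2)).add (hlog.add h3)).sub h4).add h5).sub h6).sub h7).add h8)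
  refine H.congr_deriv ?_
  unfold hfun
  have h2x : 2*x+1 ≠ 0 := by positivity
  field_simp
  ring

theorem stmt8 :
    (∀ x : ℝ, 0 < x →
      deriv (deriv (fun x : ℝ => 1 + Real.log (x + 1) - (x + 3/2) * Real.log (x + 1) + (x + 1/2) * Real.log x
    + 1 / (12 * (x + 1/2) ^ 2) - 1 / (240 * (x + 1) ^ 3) + 1 / (240 * x ^ 3)
    + 11 / (6720 * (x + 1) ^ 5) - 11 / (6720 * x ^ 5))) x =
        -(55 + 825*x + 5499*x^2 + 21325*x^3 + 52589*x^4 + 83867*x^5 + 83881*x^6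
            + 47936*x^7 + 11984*x^8) /
          (1120 * x^7 * (x+1)^7 * (2*x+1)^4)) ∧
    StrictConcaveOn ℝ (Ioi (0:ℝ)) (fun x : ℝ => 1 + Real.log (x + 1) - (x + 3/2) * Real.log (x + 1) + (x + 1/2) * Real.log x
    + 1 / (12 * (x + 1/2) ^ 2) - 1 / (240 * (x + 1) ^ 3) + 1 / (240 * x ^ 3)
    + 11 / (6720 * (x + 1) ^ 5) - 11 / (6720 * x ^ 5)) := by
  have key : ∀ x : ℝ, 0 < x → deriv (deriv vfun) x = hfun x := by
    intro x hx
    have hev : deriv vfun =ᶠ[nhds x] gfun := by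
      filter_upwards [isOpen_Ioi.mem_nhds hx] with y hy using (hderiv_v hy).deriv
    rw [hev.deriv_eq, (hderiv_g hx).deriv]
  constructor
  · exact key
  · apply strictConcaveOn_of_deriv2_neg (convex_Ioi 0)
    · exact fun y hy => ((hderiv_v hy).differentiableAt.continuousAt).continuousWithinAt
    · intro x hx
      rw [interior_Ioi] at hx
      have hx' : 0 < x := hx
      show deriv^[2] vfun x < 0
      have h2 : deriv^[2] vfun x = deriv (deriv vfun) x := by
        simp [Function.iterate_succ, Function.iterate_zero]
      rw [h2, key x hx]
      unfold hfun
      rw [neg_div, neg_lt_zero]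
      positivity
end

section
/- If a sequence (ω_n) of reals converges to 0 and lim_{n→∞} n^k·(ω_n − ω_{n+1}) = ℓ for some real ℓ and real k > 1, then lim_{n→∞} n^{k-1}·ω_n = ℓ/(k−1). -/
open Filter Topology

private lemma aux_nonpos (k : ℝ) (v : ℕ → ℝ) (hv : Filter.Tendsto v Filter.atTop (nhds 0))
    (ℓ' : ℝ) (hneg : ℓ' < 0)
    (hd : Filter.Tendsto (fun n : ℕ => (n : ℝ) ^ k * (v n - v (n + 1)))
      Filter.atTop (nhds ℓ')) :
    ∀ᶠ n in Filter.atTop, v n ≤ 0 := by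
  have h1 : ∀ᶠ n : ℕ in atTop, (n : ℝ) ^ k * (v n - v (n + 1)) < 0 :=
    hd.eventually_lt_const hneg
  obtain ⟨N, hN⟩ := eventually_atTop.mp h1
  have hmono : ∀ n, max N 1 ≤ n → ∀ m, n ≤ m → v n ≤ v m := by
    intro n hn m hm
    induction m with
    | zero =>
      have : n = 0 := by omega
      simp [this]
    | succ m ih =>
      rcases Nat.lt_or_ge m n with hlt | hge
      · have : n = m + 1 := by omega
        simp [this]
      · have hvm := ih hge
        have hmN : N ≤ m := le_trans (le_trans (le_max_left N 1) hn) hge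
        have hm1 : 1 ≤ m := le_trans (le_trans (le_max_right N 1) hn) hge
        have hpos : (0 : ℝ) < (m : ℝ) ^ k := by
          apply Real.rpow_pos_of_pos
          exact_mod_cast Nat.lt_of_lt_of_le Nat.zero_lt_one hm1
        have := hN m hmN
        nlinarith [this, hpos]
  filter_upwards [eventually_ge_atTop (max N 1)] with n hn
  exact ge_of_tendsto hv (by
    filter_upwards [eventually_ge_atTop n] with m hm
    exact hmono n hn m hm)

private lemma auxA (k : ℝ) (hk : 1 < k) :
    Filter.Tendsto (fun n : ℕ => (n : ℝ) ^ k * ((n : ℝ) ^ (1 - k) - ((n : ℝ) + 1) ^ (1 - k)))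
      Filter.atTop (nhds (k - 1)) := by
  have hg : HasDerivAt (fun t : ℝ => (1 + t) ^ (1 - k)) (1 - k) 0 := by
    have h1 : HasDerivAt (fun t : ℝ => 1 + t) 1 0 := by
      simpa using (hasDerivAt_id (0 : ℝ)).const_add 1
    have h2 := h1.rpow_const (p := 1 - k) (Or.inl (by norm_num))
    simpa [Real.one_rpow] using h2
  have hs := hasDerivAt_iff_tendsto_slope.mp hg
  have ht : Filter.Tendsto (fun n : ℕ => 1 / (n : ℝ)) atTop (𝓝[≠] (0 : ℝ)) := by
    apply tendsto_nhdsWithin_of_tendsto_nhds_of_eventually_within _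
      tendsto_one_div_atTop_nhds_zero_nat
    filter_upwards [eventually_ge_atTop 1] with n hn
    have : (n : ℝ) ≠ 0 := Nat.cast_ne_zero.mpr (by omega)
    simp [this]
  have hcomp := hs.comp ht
  have hneg := hcomp.neg
  have hEq : ∀ᶠ n : ℕ in atTop,
      (-(slope (fun t : ℝ => (1 + t) ^ (1 - k)) 0 ∘ fun n : ℕ => 1 / (n : ℝ)) n)
        = (n : ℝ) ^ k * ((n : ℝ) ^ (1 - k) - ((n : ℝ) + 1) ^ (1 - k)) := by
    filter_upwards [eventually_ge_atTop 1] with n hn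
    have hnpos : (0 : ℝ) < (n : ℝ) := by exact_mod_cast Nat.lt_of_lt_of_le Nat.zero_lt_one hn
    have hnne : (n : ℝ) ≠ 0 := ne_of_gt hnpos
    have hsplit : ((n : ℝ) + 1) ^ (1 - k) = (n : ℝ) ^ (1 - k) * (1 + 1 / (n : ℝ)) ^ (1 - k) := by
      rw [← Real.mul_rpow (le_of_lt hnpos) (by positivity)]
      congr 1
      field_simp
    have hpow : (n : ℝ) ^ k * (n : ℝ) ^ (1 - k) = (n : ℝ) := by
      rw [← Real.rpow_add hnpos]
      norm_num
    simp only [Function.comp_apply, slope_def_field]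
    rw [hsplit]
    have : (n : ℝ) ^ k * ((n : ℝ) ^ (1 - k) - (n : ℝ) ^ (1 - k) * (1 + 1 / (n : ℝ)) ^ (1 - k))
        = ((n : ℝ) ^ k * (n : ℝ) ^ (1 - k)) * (1 - (1 + 1 / (n : ℝ)) ^ (1 - k)) := by ring
    rw [this, hpow]
    field_simp
    simp only [add_zero, Real.one_rpow]
    ring
  have := hneg.congr' hEq
  simpa [neg_sub] using this

theorem stmt9 (ω : ℕ → ℝ) (k ℓ : ℝ) (hk : 1 < k)
    (h0 : Filter.Tendsto ω Filter.atTop (nhds 0))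
    (h : Filter.Tendsto (fun n : ℕ => (n : ℝ) ^ k * (ω n - ω (n + 1)))
      Filter.atTop (nhds ℓ)) :
    Filter.Tendsto (fun n : ℕ => (n : ℝ) ^ (k - 1) * ω n)
      Filter.atTop (nhds (ℓ / (k - 1))) := by
  have hk1 : (0 : ℝ) < k - 1 := by linarith
  set L := ℓ / (k - 1) with hLdef
  have hLmul : L * (k - 1) = ℓ := by
    rw [hLdef]; field_simp
  have hA := auxA k hk
  have hpow0 : Filter.Tendsto (fun n : ℕ => (n : ℝ) ^ (1 - k)) atTop (nhds 0) := by
    have h1 := (tendsto_rpow_neg_atTop hk1).comp tendsto_natCast_atTop_atTop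
    simpa [Function.comp_def, neg_sub] using h1
  have hinv : ∀ n : ℕ, 1 ≤ n → (n : ℝ) ^ (k - 1) * (n : ℝ) ^ (1 - k) = 1 := by
    intro n hn
    have hnpos : (0 : ℝ) < (n : ℝ) := by exact_mod_cast Nat.lt_of_lt_of_le Nat.zero_lt_one hn
    rw [← Real.rpow_add hnpos]
    norm_num
  have key : ∀ c : ℝ, Filter.Tendsto
      (fun n : ℕ => (n : ℝ) ^ k * ((ω n - c * (n : ℝ) ^ (1 - k))
        - (ω (n + 1) - c * ((n + 1 : ℕ) : ℝ) ^ (1 - k)))) atTop (nhds (ℓ - c * (k - 1))) := by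
    intro c
    have := h.sub (hA.const_mul c)
    apply this.congr
    intro n
    push_cast
    ring
  have upper : ∀ ε : ℝ, 0 < ε → ∀ᶠ n : ℕ in atTop, (n : ℝ) ^ (k - 1) * ω n ≤ L + ε := by
    intro ε hε
    set v : ℕ → ℝ := fun n => ω n - (L + ε) * (n : ℝ) ^ (1 - k) with hv
    have hv0 : Filter.Tendsto v atTop (nhds 0) := by
      have := h0.sub (hpow0.const_mul (L + ε))
      simpa using this
    have hd : Filter.Tendsto (fun n : ℕ => (n : ℝ) ^ k * (v n - v (n + 1))) atTop
        (nhds (ℓ - (L + ε) * (k - 1))) := key (L + ε)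
    have hneg : ℓ - (L + ε) * (k - 1) < 0 := by nlinarith
    have hle := aux_nonpos k v hv0 _ hneg hd
    filter_upwards [hle, eventually_ge_atTop 1] with n hn hn1
    have hpow_nonneg : (0 : ℝ) ≤ (n : ℝ) ^ (k - 1) := Real.rpow_nonneg (by positivity) _
    have : ω n ≤ (L + ε) * (n : ℝ) ^ (1 - k) := by
      have := hn; simp only [hv] at this; linarith
    calc (n : ℝ) ^ (k - 1) * ω n ≤ (n : ℝ) ^ (k - 1) * ((L + ε) * (n : ℝ) ^ (1 - k)) :=
          mul_le_mul_of_nonneg_left this hpow_nonneg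
      _ = (L + ε) * ((n : ℝ) ^ (k - 1) * (n : ℝ) ^ (1 - k)) := by ring
      _ = L + ε := by rw [hinv n hn1]; ring
  have lower : ∀ ε : ℝ, 0 < ε → ∀ᶠ n : ℕ in atTop, L - ε ≤ (n : ℝ) ^ (k - 1) * ω n := by
    intro ε hε
    set v : ℕ → ℝ := fun n => (L - ε) * (n : ℝ) ^ (1 - k) - ω n with hv
    have hv0 : Filter.Tendsto v atTop (nhds 0) := by
      have := (hpow0.const_mul (L - ε)).sub h0
      simpa using this
    have hd : Filter.Tendsto (fun n : ℕ => (n : ℝ) ^ k * (v n - v (n + 1))) atTop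
        (nhds ((L - ε) * (k - 1) - ℓ)) := by
      have := (key (L - ε)).neg
      apply this.congr' ?_ |>.mono_right ?_
      · filter_upwards with n; simp only [hv]; push_cast; ring_nf
      · simp [neg_sub]
    have hneg : (L - ε) * (k - 1) - ℓ < 0 := by nlinarith
    have hle := aux_nonpos k v hv0 _ hneg hd
    filter_upwards [hle, eventually_ge_atTop 1] with n hn hn1
    have hpow_nonneg : (0 : ℝ) ≤ (n : ℝ) ^ (k - 1) := Real.rpow_nonneg (by positivity) _
    have hω : (L - ε) * (n : ℝ) ^ (1 - k) ≤ ω n := by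
      have := hn; simp only [hv] at this; linarith
    calc L - ε = (L - ε) * ((n : ℝ) ^ (k - 1) * (n : ℝ) ^ (1 - k)) := by rw [hinv n hn1]; ring
      _ = (n : ℝ) ^ (k - 1) * ((L - ε) * (n : ℝ) ^ (1 - k)) := by ring
      _ ≤ (n : ℝ) ^ (k - 1) * ω n := mul_le_mul_of_nonneg_left hω hpow_nonneg
  rw [tendsto_order]
  constructor
  · intro b hb
    have hε : (0 : ℝ) < (L - b) / 2 := by linarith
    filter_upwards [lower _ hε] with n hn
    linarith
  · intro b hb
    have hε : (0 : ℝ) < (b - L) / 2 := by linarith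
    filter_upwards [upper _ hε] with n hn
    linarith
end

section
/- For x > 0, 1/x + 1/(2x^2) + 1/(6x^3) − 1/(30x^5) < ψ'(x) < 1/x + 1/(2x^2) + 1/(6x^3) − 1/(30x^5) + 1/(42x^7). -/
open Real Filter Topology Asymptotics

/-- The trigamma series. -/
noncomputable def triS (x : ℝ) : ℝ := ∑' n : ℕ, 1 / (x + n) ^ 2

set_option maxHeartbeats 1000000 in
lemma summable_triS {x : ℝ} (hx : 0 < x) : Summable fun n : ℕ => 1 / (x + n) ^ 2 := by
  rw [← summable_nat_add_iff (f := fun n : ℕ => 1 / (x + (n : ℝ)) ^ 2) 1]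
  have hmaj : Summable (fun n : ℕ => 1 / ((n : ℝ) + 1) ^ 2) := by
    have := (summable_nat_add_iff (f := fun n : ℕ => 1 / (n : ℝ) ^ 2) 1).mpr
      (by exact_mod_cast Real.summable_one_div_nat_pow.mpr one_lt_two)
    exact this.congr fun n => by push_cast; ring
  apply Summable.of_nonneg_of_le (fun n => by positivity) _ hmaj
  intro n
  have h1 : (0:ℝ) < (n:ℝ) + 1 := by positivity
  have h2 : (n:ℝ) + 1 ≤ x + (n + 1 : ℕ) := by push_cast; linarith
  apply one_div_le_one_div_of_le (by positivity)
  exact pow_le_pow_left₀ h1.le h2 2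

lemma triS_rec {x : ℝ} (hx : 0 < x) : triS x = 1 / x ^ 2 + triS (x + 1) := by
  unfold triS
  rw [Summable.tsum_eq_zero_add (summable_triS hx)]
  congr 1
  · norm_num
  · apply tsum_congr
    intro n
    push_cast
    ring_nf

lemma triS_tail {x : ℝ} (hx : 0 < x) :
    Tendsto (fun N : ℕ => triS (x + N)) atTop (𝓝 0) := by
  have hs := summable_triS hx
  have key : ∀ N : ℕ, triS (x + N) = (∑' n : ℕ, 1 / (x + n) ^ 2) -
      ∑ i ∈ Finset.range N, 1 / (x + i) ^ 2 := by
    intro N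
    have := Summable.sum_add_tsum_nat_add (f := fun n : ℕ => 1 / (x + (n:ℝ)) ^ 2) N hs
    have h2 : triS (x + N) = ∑' n : ℕ, 1 / (x + (n + N : ℕ)) ^ 2 := by
      unfold triS
      apply tsum_congr
      intro n
      push_cast
      ring_nf
    rw [h2]
    linarith [this]
  simp_rw [key]
  have := hs.hasSum.tendsto_sum_nat
  have h0 : (0:ℝ) = (∑' n : ℕ, 1 / (x + n) ^ 2) - (∑' n : ℕ, 1 / (x + n) ^ 2) := by ring
  rw [h0]
  exact tendsto_const_nhds.sub this


/-! ### Series representation of trigamma -/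

lemma summable_sq_inv : Summable (fun n : ℕ => 1 / ((n : ℝ) + 1) ^ 2) := by
  have := (summable_nat_add_iff (f := fun n : ℕ => 1 / (n : ℝ) ^ 2) 1).mpr
    (by exact_mod_cast Real.summable_one_div_nat_pow.mpr one_lt_two)
  exact this.congr fun n => by push_cast; ring

lemma log_ub {t : ℝ} (ht : 0 ≤ t) : Real.log (1 + t) ≤ t := by
  have := Real.log_le_sub_one_of_pos (show (0:ℝ) < 1 + t by linarith)
  linarith

lemma log_lb {t : ℝ} (ht : 0 ≤ t) : t - t ^ 2 ≤ Real.log (1 + t) := by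
  have h1t : (0:ℝ) < 1 + t := by linarith
  have h := Real.one_sub_inv_le_log_of_pos h1t
  have h2 : t - t ^ 2 ≤ 1 - (1 + t)⁻¹ := by
    rw [sub_le_sub_iff, ← le_sub_iff_add_le']
    have : 1 - (t - t^2) = (1 - t + t^2) := by ring
    rw [inv_le_iff_one_le_mul₀ h1t] -- might fail; fallback below
    nlinarith
  linarith

/-- term of the log-Gamma series -/
noncomputable def uf (n : ℕ) (y : ℝ) : ℝ :=
  y * Real.log (1 + 1 / ((n:ℝ) + 1)) - Real.log (1 + y / ((n:ℝ) + 1))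

/-- its derivative -/
noncomputable def uf' (n : ℕ) (y : ℝ) : ℝ :=
  Real.log (1 + 1 / ((n:ℝ) + 1)) - 1 / (y + ((n:ℝ) + 1))

noncomputable def Ff (y : ℝ) : ℝ := ∑' n : ℕ, uf n y
noncomputable def Gf (y : ℝ) : ℝ := ∑' n : ℕ, uf' n y

lemma hasDerivAt_uf (n : ℕ) {y : ℝ} (hy : 0 < y) : HasDerivAt (uf n) (uf' n y) y := by
  have hn1 : (0:ℝ) < (n:ℝ) + 1 := by positivity
  have hden : 1 + y / ((n:ℝ) + 1) ≠ 0 := by positivity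
  have h1 : HasDerivAt (fun z : ℝ => 1 + z / ((n:ℝ) + 1)) (1 / ((n:ℝ) + 1)) y := by
    simpa using ((hasDerivAt_id y).div_const ((n:ℝ)+1)).const_add 1
  have h2 := h1.log hden
  have h3 : HasDerivAt (fun z : ℝ => z * Real.log (1 + 1 / ((n:ℝ) + 1)))
      (Real.log (1 + 1 / ((n:ℝ) + 1))) y := hasDerivAt_mul_const _
  have h4 := h3.sub h2
  convert h4 using 1
  · rfl
  · rfl
  · rfl
  unfold uf'
  have he : 1 / ((n:ℝ)+1) / (1 + y / ((n:ℝ)+1)) = 1 / (y + ((n:ℝ)+1)) := by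
    rw [div_div]
    congr 1
    field_simp
    ring
  rw [he]

lemma hasDerivAt_uf' (n : ℕ) {y : ℝ} (hy : 0 < y) :
    HasDerivAt (uf' n) (1 / (y + ((n:ℝ) + 1)) ^ 2) y := by
  have hne : y + ((n:ℝ) + 1) ≠ 0 := by positivity
  have h1 : HasDerivAt (fun z : ℝ => z + ((n:ℝ) + 1)) 1 y := (hasDerivAt_id y).add_const _
  have h2 := h1.inv hne
  have h3 := (hasDerivAt_const y (Real.log (1 + 1 / ((n:ℝ) + 1)))).sub h2
  convert h3 using 1
  · rfl
  · rfl
  · unfold uf'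
    ext z
    rw [show (1:ℝ) / (z + ((n:ℝ) + 1)) = (z + ((n:ℝ) + 1))⁻¹ from one_div _]
    rfl
  · field_simp
    ring

lemma uf_bound {x : ℝ} (hx : 0 < x) (n : ℕ) :
    ‖uf n x‖ ≤ (x ^ 2 + x) * (1 / ((n:ℝ) + 1) ^ 2) := by
  have hn1 : (0:ℝ) < (n:ℝ) + 1 := by positivity
  set t : ℝ := 1 / ((n:ℝ) + 1) with htdef
  have ht : 0 < t := by positivity
  have hs : 0 < x * t := by positivity
  have hxt : x / ((n:ℝ) + 1) = x * t := by rw [htdef]; ring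
  have hub1 : Real.log (1 + t) ≤ t := log_ub ht.le
  have hlb1 : t - t ^ 2 ≤ Real.log (1 + t) := log_lb ht.le
  have hub2 : Real.log (1 + x * t) ≤ x * t := log_ub hs.le
  have hlb2 : x * t - (x * t) ^ 2 ≤ Real.log (1 + x * t) := log_lb hs.le
  rw [Real.norm_eq_abs, abs_le]
  unfold uf
  rw [hxt]
  constructor
  · have : t ^ 2 = 1 / ((n:ℝ)+1)^2 := by rw [htdef, div_pow, one_pow]
    nlinarith [sq_nonneg t, hx]
  · have : t ^ 2 = 1 / ((n:ℝ)+1)^2 := by rw [htdef, div_pow, one_pow]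
    nlinarith [sq_nonneg t, hx]

lemma uf'_bound {x B : ℝ} (hx : 0 < x) (hB : x < B) (n : ℕ) :
    ‖uf' n x‖ ≤ (B + 1) * (1 / ((n:ℝ) + 1) ^ 2) := by
  set c : ℝ := (n:ℝ) + 1 with hc
  have hc0 : (0:ℝ) < c := by positivity
  have hxc : (0:ℝ) < x + c := by linarith
  have hub1 : Real.log (1 + 1/c) ≤ 1/c := log_ub (by positivity)
  have hlb1 : 1/c - (1/c)^2 ≤ Real.log (1 + 1/c) := log_lb (by positivity)
  have hfrac_ub : 1 / (x + c) ≤ 1/c := by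
    apply one_div_le_one_div_of_le hc0; linarith
  have hgap : 1/c - 1/(x+c) ≤ B * (1/c^2) := by
    rw [div_sub_div _ _ hc0.ne' hxc.ne', div_le_iff₀ (by positivity)]
    have h1 : B * (1 / c ^ 2) * (c * (x + c)) = B*(x+c)/c := by field_simp
    rw [h1, le_div_iff₀ hc0]
    nlinarith
  have hsq : (1/c)^2 = 1/c^2 := by rw [div_pow, one_pow]
  rw [Real.norm_eq_abs, abs_le]
  unfold uf'
  rw [← hc]
  constructor
  · nlinarith
  · nlinarith

lemma summable_uf {x : ℝ} (hx : 0 < x) : Summable fun n => uf n x :=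
  Summable.of_norm (Summable.of_nonneg_of_le (fun n => norm_nonneg _) (uf_bound hx)
    (summable_sq_inv.mul_left _))

lemma summable_uf' {x : ℝ} (hx : 0 < x) : Summable fun n => uf' n x :=
  Summable.of_norm (Summable.of_nonneg_of_le (fun n => norm_nonneg _)
    (uf'_bound hx (lt_add_one x)) (summable_sq_inv.mul_left _))

lemma sum_uf_eq {x : ℝ} (hx : 0 < x) (N : ℕ) :
    ∑ n ∈ Finset.range N, uf n x =
      Real.BohrMollerup.logGammaSeq x N + Real.log x +
        x * (Real.log (N + 1) - Real.log N) := by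
  induction N with
  | zero =>
    simp [Real.BohrMollerup.logGammaSeq, uf]
  | succ N ih =>
    rw [Finset.sum_range_succ, ih]
    have hN1 : (0:ℝ) < (N:ℝ) + 1 := by positivity
    have hlog1 : Real.log (1 + 1 / ((N:ℝ) + 1)) =
        Real.log ((N:ℝ) + 1 + 1) - Real.log ((N:ℝ) + 1) := by
      rw [← Real.log_div (by positivity) (by positivity)]
      congr 1
      field_simp
    have hlog2 : Real.log (1 + x / ((N:ℝ) + 1)) =
        Real.log (x + ((N:ℝ) + 1)) - Real.log ((N:ℝ) + 1) := by
      rw [← Real.log_div (by positivity) (by positivity)]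
      congr 1
      field_simp
      ring
    have hfac : Real.log (((N+1).factorial : ℕ) : ℝ) =
        Real.log ((N.factorial : ℕ) : ℝ) + Real.log ((N:ℝ) + 1) := by
      rw [Nat.factorial_succ]
      push_cast
      rw [Real.log_mul (by positivity) (by positivity)]
      ring
    unfold Real.BohrMollerup.logGammaSeq
    unfold uf
    rw [hlog1, hlog2, hfac,
      Finset.sum_range_succ (f := fun m : ℕ => Real.log (x + m)) (N + 1),
      Finset.sum_range_succ (f := fun m : ℕ => Real.log (x + m)) N]
    push_cast
    ring

lemma hasSum_uf {x : ℝ} (hx : 0 < x) :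
    HasSum (fun n => uf n x) (Real.log (Real.Gamma x) + Real.log x) := by
  rw [hasSum_iff_tendsto_nat_of_summable_norm
    (Summable.of_nonneg_of_le (fun n => norm_nonneg _) (uf_bound hx)
      (summable_sq_inv.mul_left _))]
  have h1 := Real.BohrMollerup.tendsto_log_gamma hx
  have h2 := Real.tendsto_log_nat_add_one_sub_log.const_mul x
  have h3 := (h1.add (tendsto_const_nhds (x := Real.log x))).add h2
  rw [show Real.log (Real.Gamma x) + Real.log x + x * 0
      = Real.log (Real.Gamma x) + Real.log x by ring] at h3
  exact h3.congr fun N => (sum_uf_eq hx N).symm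

lemma Ff_eq {x : ℝ} (hx : 0 < x) :
    Ff x = Real.log (Real.Gamma x) + Real.log x := (hasSum_uf hx).tsum_eq

lemma hasDerivAt_Ff {x : ℝ} (hx : 0 < x) : HasDerivAt Ff (Gf x) x := by
  unfold Ff Gf
  apply hasDerivAt_tsum_of_isPreconnected
    (u := fun n : ℕ => (x + 1 + 1) * (1 / ((n:ℝ) + 1) ^ 2))
    (summable_sq_inv.mul_left _) isOpen_Ioo isPreconnected_Ioo
    (fun n y hy => hasDerivAt_uf n hy.1)
    (fun n y hy => uf'_bound hy.1 (by linarith [hy.2]) n)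
    (show x ∈ Set.Ioo 0 (x+1) by constructor <;> linarith)
    ((summable_uf hx))
    (show x ∈ Set.Ioo 0 (x+1) by constructor <;> linarith)

lemma hasDerivAt_Gf {x : ℝ} (hx : 0 < x) :
    HasDerivAt Gf (∑' n : ℕ, 1 / (x + ((n:ℝ) + 1)) ^ 2) x := by
  unfold Gf
  apply hasDerivAt_tsum_of_isPreconnected
    (u := fun n : ℕ => 1 / ((n:ℝ) + 1) ^ 2)
    summable_sq_inv isOpen_Ioi isPreconnected_Ioi
    (fun n y hy => hasDerivAt_uf' n hy)
    (fun n y hy => ?_)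
    (show (1:ℝ) ∈ Set.Ioi 0 by norm_num)
    (summable_uf' one_pos)
    (show x ∈ Set.Ioi 0 from hx)
  have hy : (0:ℝ) < y := hy
  have hn1 : (0:ℝ) < (n:ℝ) + 1 := by positivity
  rw [Real.norm_eq_abs, abs_of_nonneg (by positivity)]
  apply one_div_le_one_div_of_le (by positivity)
  have : (n:ℝ) + 1 ≤ y + ((n:ℝ) + 1) := by linarith
  exact pow_le_pow_left₀ hn1.le this 2

/-- trigamma equals its series, for positive x. -/
lemma trigamma_eq_s14 {x : ℝ} (hx : 0 < x) : trigamma x = triS x := by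
  have hlogderiv : ∀ y : ℝ, 0 < y →
      HasDerivAt (fun z => Real.log (Real.Gamma z)) (Gf y - 1/y) y := by
    intro y hy
    have hF := hasDerivAt_Ff hy
    have hlog := Real.hasDerivAt_log hy.ne'
    have h := hF.sub hlog
    rw [show Gf y - 1/y = Gf y - y⁻¹ by rw [one_div]]
    apply h.congr_of_eventuallyEq
    filter_upwards [isOpen_Ioi.mem_nhds hy] with z hz
    rw [Pi.sub_apply, Ff_eq hz]
    ring
  have hd1 : ∀ y : ℝ, 0 < y → deriv (fun z => Real.log (Real.Gamma z)) y = Gf y - 1/y :=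
    fun y hy => (hlogderiv y hy).deriv
  have hG := hasDerivAt_Gf hx
  have hinv : HasDerivAt (fun y : ℝ => 1/y) (-(x^2)⁻¹) x := by
    simpa [one_div] using hasDerivAt_inv hx.ne'
  have h2 : HasDerivAt (fun y => Gf y - 1/y)
      ((∑' n : ℕ, 1 / (x + ((n:ℝ) + 1)) ^ 2) + (x^2)⁻¹) x := by
    have := hG.sub hinv
    convert this using 1
    · rfl
    · rfl
    · rfl
    ring
  have hit : trigamma x = deriv (deriv (fun z => Real.log (Real.Gamma z))) x := by
    unfold trigamma
    rw [show (2:ℕ) = 1 + 1 from rfl, iteratedDeriv_succ, iteratedDeriv_one]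
  rw [hit]
  have heq : deriv (fun z => Real.log (Real.Gamma z)) =ᶠ[nhds x] fun y => Gf y - 1/y := by
    filter_upwards [isOpen_Ioi.mem_nhds hx] with z hz
    exact hd1 z hz
  rw [heq.deriv_eq, h2.deriv]
  rw [triS_rec hx]
  have ht1 : triS (x+1) = ∑' n : ℕ, 1 / (x + ((n:ℝ) + 1)) ^ 2 := by
    unfold triS
    apply tsum_congr; intro n; push_cast; ring_nf
  rw [ht1, one_div]
  ring

/-- telescoping positivity -/
lemma tele_pos {φ d : ℝ → ℝ} {x : ℝ} (hx : 0 < x)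
    (hrec : ∀ y, 0 < y → φ y = d y + φ (y + 1))
    (hd : ∀ y, 0 < y → 0 < d y)
    (hlim : Tendsto (fun N : ℕ => φ (x + N)) atTop (𝓝 0)) : 0 < φ x := by
  have key : ∀ N : ℕ, d x + φ (x + (N + 1 : ℕ)) ≤ φ x := by
    intro N
    induction N with
    | zero =>
      have := hrec x hx
      push_cast
      linarith [hrec x hx]
    | succ n ih =>
      have hpos : (0:ℝ) < x + (n + 1 : ℕ) := by positivity
      have h2 := hrec _ hpos
      have h3 := hd _ hpos
      have hc : x + (n + 1 : ℕ) + 1 = x + (n + 1 + 1 : ℕ) := by push_cast; ring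
      rw [hc] at h2
      linarith
  have hlim' : Tendsto (fun N : ℕ => d x + φ (x + (N + 1 : ℕ))) atTop (𝓝 (d x)) := by
    have : Tendsto (fun N : ℕ => φ (x + (N + 1 : ℕ))) atTop (𝓝 0) :=
      hlim.comp (tendsto_add_atTop_nat 1)
    simpa using tendsto_const_nhds.add this
  have := le_of_tendsto hlim' (Eventually.of_forall key)
  linarith [hd x hx]

private lemma L_tail {x : ℝ} (hx : 0 < x) (c : ℝ) (p : ℕ) (hp : 0 < p) :
    Tendsto (fun N : ℕ => c / (x + N) ^ p) atTop (𝓝 0) := by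
  have h1 : Tendsto (fun N : ℕ => x + (N:ℝ)) atTop atTop :=
    tendsto_atTop_add_const_left _ _ tendsto_natCast_atTop_atTop
  have h2 : Tendsto (fun N : ℕ => (x + (N:ℝ)) ^ p) atTop atTop :=
    (tendsto_pow_atTop hp.ne').comp h1
  have h3 : Tendsto (fun N : ℕ => ((x + (N:ℝ)) ^ p)⁻¹) atTop (𝓝 0) :=
    tendsto_inv_atTop_zero.comp h2
  have := h3.const_mul c
  simpa [div_eq_mul_inv] using this

set_option maxHeartbeats 2000000 in
theorem stmt14 (x : ℝ) (hx : 0 < x) :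
    1/x + 1/(2*x^2) + 1/(6*x^3) - 1/(30*x^5) < trigamma x ∧
    trigamma x < 1/x + 1/(2*x^2) + 1/(6*x^3) - 1/(30*x^5) + 1/(42*x^7) := by
  set L : ℝ → ℝ := fun y => 1/y + 1/(2*y^2) + 1/(6*y^3) - 1/(30*y^5) with hL
  set U : ℝ → ℝ := fun y => L y + 1/(42*y^7) with hU
  have hLtail : ∀ z : ℝ, 0 < z → Tendsto (fun N : ℕ => L (z + N)) atTop (𝓝 0) := by
    intro z hz
    have e1 := L_tail hz 1 1 one_pos
    have e2 := L_tail hz (1/2 : ℝ) 2 two_pos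
    have e3 := L_tail hz (1/6 : ℝ) 3 (by norm_num)
    have e5 := L_tail hz (1/30 : ℝ) 5 (by norm_num)
    have h := ((e1.add e2).add e3).sub e5
    norm_num at h
    exact h.congr fun N => by
      have h0 : (z + (N:ℝ)) ≠ 0 := by positivity
      simp only [hL]; field_simp
  have hUtail : ∀ z : ℝ, 0 < z → Tendsto (fun N : ℕ => U (z + N)) atTop (𝓝 0) := by
    intro z hz
    have e7 := L_tail hz (1/42 : ℝ) 7 (by norm_num)
    have h := (hLtail z hz).add e7
    norm_num at h
    exact h.congr fun N => by
      have h0 : (z + (N:ℝ)) ≠ 0 := by positivity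
      simp only [hU]; field_simp
  constructor
  · -- lower bound: φ = triS - L
    rw [trigamma_eq_s14 hx]
    have h := tele_pos (φ := fun y => triS y - L y)
      (d := fun y => 1/y^2 - (L y - L (y+1))) hx ?_ ?_ ?_
    · simp only [hL] at h ⊢; linarith
    · intro y hy
      have := triS_rec hy
      linarith
    · intro y hy
      have hy1 : (0:ℝ) < y + 1 := by linarith
      have h30 : (0:ℝ) < 30 * y^5 * (y+1)^5 := by positivity
      have hpos : 0 < (1/y^2 - (L y - L (y+1))) * (30 * y^5 * (y+1)^5) := by
        have key : (1/y^2 - (L y - L (y+1))) * (30 * y^5 * (y+1)^5) =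
            1 + 5*y + 5*y^2 := by
          simp only [hL]
          field_simp
          ring
        rw [key]; positivity
      nlinarith [hpos, h30]
    · have := (triS_tail hx).sub (hLtail x hx)
      simpa using this
  · -- upper bound: φ = U - triS
    rw [trigamma_eq_s14 hx]
    have h := tele_pos (φ := fun y => U y - triS y)
      (d := fun y => (U y - U (y+1)) - 1/y^2) hx ?_ ?_ ?_
    · simp only [hU, hL] at h ⊢; linarith
    · intro y hy
      have := triS_rec hy
      linarith
    · intro y hy
      have hy1 : (0:ℝ) < y + 1 := by linarith
      have h210 : (0:ℝ) < 210 * y^7 * (y+1)^7 := by positivity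
      have hpos : 0 < ((U y - U (y+1)) - 1/y^2) * (210 * y^7 * (y+1)^7) := by
        have key : ((U y - U (y+1)) - 1/y^2) * (210 * y^7 * (y+1)^7) =
            5 + 35*y + 98*y^2 + 126*y^3 + 63*y^4 := by
          simp only [hU, hL]
          field_simp
          ring
        rw [key]; positivity
      nlinarith [hpos, h210]
    · have := (hUtail x hx).sub (triS_tail hx)
      simpa using this
end

section
/- For all x ≥ 1, 1/(12x) − 1/(360x^3) + 1/(1260x^5) − 1/(1680x^7) − (1/12)·[1/(x+1/2) + 1/(2(x+1/2)^2) + 1/(6(x+1/2)^3) − 1/(30(x+1/2)^5) + 1/(42(x+1/2)^7)] − 1/(240x^3) + 11/(6720x^5) > 0. -/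
theorem stmt17 (x : ℝ) (hx : 1 ≤ x) :
    0 < 1/(12*x) - 1/(360*x^3) + 1/(1260*x^5) - 1/(1680*x^7)
      - (1/12) * (1/(x+1/2) + 1/(2*(x+1/2)^2) + 1/(6*(x+1/2)^3) - 1/(30*(x+1/2)^5)
          + 1/(42*(x+1/2)^7))
      - 1/(240*x^3) + 11/(6720*x^5) := by
  have hx0 : (0:ℝ) < x := lt_of_lt_of_le one_pos hx
  have hy : (0:ℝ) < x + 1/2 := by linarith
  set t := x - 1 with ht
  have htt : 0 ≤ t := by simp [ht]; linarith
  have key : 1/(12*x) - 1/(360*x^3) + 1/(1260*x^5) - 1/(1680*x^7)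
      - (1/12) * (1/(x+1/2) + 1/(2*(x+1/2)^2) + 1/(6*(x+1/2)^3) - 1/(30*(x+1/2)^5)
          + 1/(42*(x+1/2)^7))
      - 1/(240*x^3) + 11/(6720*x^5)
      = (12547 + 93268*t + 263179*t^2 + 382830*t^3 + 315336*t^4 + 147504*t^5
          + 35952*t^6 + 3424*t^7) / (20160 * x^7 * (2*x+1)^7) := by
    have h2 : (0:ℝ) < 2*x + 1 := by linarith
    field_simp
    rw [ht]
    ring_nf
  rw [key]
  apply div_pos
  · positivity
  · positivity
end
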